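/- arXiv:0709.2555 — 4 statements merged into one kernel-verified Lean document; each statement's English description precedes it below -/
import Mathlib

section
/- Let 𝒫 be a configuration of n points in general position in the plane, with n even. Then there exists an integer i with 0 ≤ i ≤ n such that the number of unordered pairs {P,Q} of distinct points of 𝒫 for which n(P,Q) is even equals i(n−i); for all remaining pairs, n(P,Q) is odd. -/
open scoped Classical

noncomputable section

/-- The set Pts is in general position: no three distinct points are collinear. -/
def GenPos (Pts : Finset (ℝ × ℝ)) : Prop :=
  ∀ A ∈ Pts, ∀ B ∈ Pts, ∀ C ∈ Pts, A ≠ B → A ≠ C → B ≠ C →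
    ¬ Collinear ℝ ({A, B, C} : Set (ℝ × ℝ))

/-- `sepCount Pts P Q` is the number of unordered pairs `{R, S}` of points of `Pts \ {P, Q}`
such that the line through `R` and `S` strictly separates `P` and `Q`. -/
def sepCount (Pts : Finset (ℝ × ℝ)) (P Q : ℝ × ℝ) : ℕ :=
  ((Finset.powersetCard 2 (Pts \ {P, Q})).filter
    (fun s => (affineSpan ℝ (↑s : Set (ℝ × ℝ))).SOppSide P Q)).card

/-- The vertices of the convex hull of `Pts` (its extreme points). -/
def hullVertices (Pts : Finset (ℝ × ℝ)) : Set (ℝ × ℝ) :=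
  Set.extremePoints ℝ (convexHull ℝ (↑Pts : Set (ℝ × ℝ)))

/-- `Q : ZMod k → ℝ × ℝ` lists the points of `S` in convex position, in cyclic order:
`Q` is an injective enumeration of `S` and, for every `i`, all points of `S` other than
`Q i` and `Q (i+1)` lie strictly on the same side of the line through `Q i` and `Q (i+1)`
(i.e. each consecutive pair spans an edge of the convex hull of `S`). -/
def IsConvexCycle (k : ℕ) (S : Set (ℝ × ℝ)) (Q : ZMod k → ℝ × ℝ) : Prop :=
  Function.Injective Q ∧ Set.range Q = S ∧
    ∀ i : ZMod k, ∀ x ∈ S, ∀ y ∈ S,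
      x ∉ ({Q i, Q (i + 1)} : Set (ℝ × ℝ)) → y ∉ ({Q i, Q (i + 1)} : Set (ℝ × ℝ)) →
        (affineSpan ℝ ({Q i, Q (i + 1)} : Set (ℝ × ℝ))).SSameSide x y

/-! ### Auxiliary machinery -/

def det3 (A B C : ℝ × ℝ) : ℝ :=
  (B.1 - A.1) * (C.2 - A.2) - (B.2 - A.2) * (C.1 - A.1)

lemma exists_smul_of_det3 {A B p : ℝ × ℝ} (hAB : B ≠ A) (h : det3 A B p = 0) :
    ∃ r : ℝ, p = r • (B - A) +ᵥ A := by
  have hkey : (B.1 - A.1) * (p.2 - A.2) = (B.2 - A.2) * (p.1 - A.1) := by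
    unfold det3 at h; linarith
  by_cases h1 : B.1 - A.1 ≠ 0
  · refine ⟨(p.1 - A.1) / (B.1 - A.1), ?_⟩
    apply Prod.ext <;> simp [Prod.smul_def, vadd_eq_add]
    · field_simp
      ring
    · field_simp
      nlinarith [hkey]
  · push_neg at h1
    have h2 : B.2 - A.2 ≠ 0 := by
      intro h2
      apply hAB
      apply Prod.ext <;> [linarith; linarith]
    refine ⟨(p.2 - A.2) / (B.2 - A.2), ?_⟩
    apply Prod.ext <;> simp [Prod.smul_def, vadd_eq_add]
    · field_simp
      nlinarith [hkey]
    · field_simp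
      ring

lemma collinear_iff_det3 (A B C : ℝ × ℝ) :
    Collinear ℝ ({A, B, C} : Set (ℝ × ℝ)) ↔ det3 A B C = 0 := by
  constructor
  · intro h
    rw [collinear_iff_of_mem (Set.mem_insert A _)] at h
    obtain ⟨v, hv⟩ := h
    obtain ⟨r₂, hB⟩ := hv B (by simp)
    obtain ⟨r₃, hC⟩ := hv C (by simp)
    subst hB; subst hC
    simp [det3, Prod.smul_def, vadd_eq_add]
    ring
  · intro h
    by_cases hAB : B = A
    · have hset : ({A, B, C} : Set (ℝ × ℝ)) = {A, C} := by rw [hAB]; simp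
      rw [hset]; exact collinear_pair ℝ A C
    · rw [collinear_iff_of_mem (Set.mem_insert A _)]
      refine ⟨B - A, ?_⟩
      intro p hp
      rcases hp with rfl | rfl | hp
      · exact ⟨0, by simp⟩
      · exact ⟨1, by simp⟩
      · rcases hp with rfl
        exact exists_smul_of_det3 hAB h

lemma mem_line_iff_det3 {A B : ℝ × ℝ} (hAB : A ≠ B) (x : ℝ × ℝ) :
    x ∈ line[ℝ, A, B] ↔ det3 A B x = 0 := by
  constructor
  · intro h
    have := collinear_insert_of_mem_affineSpan_pair h
    have h2 : Collinear ℝ ({A, B, x} : Set (ℝ × ℝ)) := by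
      apply this.subset
      intro p hp
      simp at hp ⊢
      tauto
    exact (collinear_iff_det3 A B x).1 h2
  · intro h
    have h2 : Collinear ℝ ({A, B, x} : Set (ℝ × ℝ)) := (collinear_iff_det3 A B x).2 h
    exact h2.mem_affineSpan_of_mem_of_ne (by simp) (by simp) (by simp) hAB

lemma sOppSide_iff_det3 {A B : ℝ × ℝ} (hAB : A ≠ B) (x y : ℝ × ℝ) :
    (line[ℝ, A, B] : AffineSubspace ℝ (ℝ × ℝ)).SOppSide x y ↔
      det3 A B x * det3 A B y < 0 := by
  constructor
  · rintro ⟨⟨p₁, hp₁, p₂, hp₂, hray⟩, hx, hy⟩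
    have hfx : det3 A B x ≠ 0 := fun h => hx ((mem_line_iff_det3 hAB x).2 h)
    have hfy : det3 A B y ≠ 0 := fun h => hy ((mem_line_iff_det3 hAB y).2 h)
    have hfp₁ : det3 A B p₁ = 0 := (mem_line_iff_det3 hAB p₁).1 hp₁
    have hfp₂ : det3 A B p₂ = 0 := (mem_line_iff_det3 hAB p₂).1 hp₂
    rcases hray with h0 | h0 | ⟨r₁, r₂, hr₁, hr₂, heq⟩
    · exfalso
      have hxp : x = p₁ := by
        have h1 : x -ᵥ p₁ = 0 := h0
        rw [vsub_eq_sub, sub_eq_zero] at h1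
        exact h1
      exact hx (hxp ▸ hp₁)
    · exfalso
      have hyp : p₂ = y := by
        have h1 : p₂ -ᵥ y = 0 := h0
        rw [vsub_eq_sub, sub_eq_zero] at h1
        exact h1
      exact hy (hyp ▸ hp₂)
    · have hc1 : (r₁ • (x -ᵥ p₁) : ℝ × ℝ).1 = (r₂ • (p₂ -ᵥ y) : ℝ × ℝ).1 := by rw [heq]
      have hc2 : (r₁ • (x -ᵥ p₁) : ℝ × ℝ).2 = (r₂ • (p₂ -ᵥ y) : ℝ × ℝ).2 := by rw [heq]
      simp only [vsub_eq_sub, Prod.smul_fst, Prod.smul_snd, Prod.fst_sub, Prod.snd_sub,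
        smul_eq_mul] at hc1 hc2
      have hkey : r₁ * det3 A B x = - (r₂ * det3 A B y) := by
        have e1 : r₁ * det3 A B x - r₁ * det3 A B p₁
            = (B.1 - A.1) * (r₁ * (x.2 - p₁.2)) - (B.2 - A.2) * (r₁ * (x.1 - p₁.1)) := by
          unfold det3; ring
        have e2 : r₂ * det3 A B p₂ - r₂ * det3 A B y
            = (B.1 - A.1) * (r₂ * (p₂.2 - y.2)) - (B.2 - A.2) * (r₂ * (p₂.1 - y.1)) := by
          unfold det3; ring
        rw [hfp₁, mul_zero, sub_zero] at e1
        rw [hfp₂, mul_zero, zero_sub] at e2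
        rw [e1, ← hc1, ← hc2] at *
        linarith [e2]
      have hy2 : 0 < det3 A B y ^ 2 := by positivity
      have h3 : r₁ * (det3 A B x * det3 A B y) = -(r₂ * det3 A B y ^ 2) := by
        have h := congrArg (· * det3 A B y) hkey
        nlinarith [h]
      nlinarith [h3, mul_pos hr₂ hy2, hr₁]
  · intro hprod
    have hfx : det3 A B x ≠ 0 := fun h => by rw [h] at hprod; simp at hprod
    have hfy : det3 A B y ≠ 0 := fun h => by rw [h] at hprod; simp at hprod
    have hcase : (det3 A B x < 0 ∧ 0 < det3 A B y) ∨ (0 < det3 A B x ∧ det3 A B y < 0) := by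
      rcases lt_or_gt_of_ne hfx with h | h <;> rcases lt_or_gt_of_ne hfy with h' | h'
      · exfalso; nlinarith
      · exact Or.inl ⟨h, h'⟩
      · exact Or.inr ⟨h, h'⟩
      · exfalso; nlinarith
    have hd : det3 A B x - det3 A B y ≠ 0 := by
      rcases hcase with ⟨h, h'⟩ | ⟨h, h'⟩ <;> intro h0 <;> nlinarith
    set t : ℝ := det3 A B x / (det3 A B x - det3 A B y) with ht
    have ht0 : 0 < t := by
      rcases hcase with ⟨h, h'⟩ | ⟨h, h'⟩
      · exact div_pos_of_neg_of_neg h (by linarith)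
      · exact div_pos h (by linarith)
    have htm : t - 1 = det3 A B y / (det3 A B x - det3 A B y) := by
      rw [ht]
      field_simp
      ring
    have ht1 : t < 1 := by
      have : t - 1 < 0 := by
        rw [htm]
        rcases hcase with ⟨h, h'⟩ | ⟨h, h'⟩
        · exact div_neg_of_pos_of_neg h' (by linarith)
        · exact div_neg_of_neg_of_pos h' (by linarith)
      linarith
    set p : ℝ × ℝ := t • (y - x) + x with hp
    have hco : p.1 = t * (y.1 - x.1) + x.1 ∧ p.2 = t * (y.2 - x.2) + x.2 := by
      constructor <;> simp [hp]
    have hfp : det3 A B p = (1 - t) * det3 A B x + t * det3 A B y := by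
      unfold det3
      rw [hco.1, hco.2]
      ring
    have hfp0 : det3 A B p = 0 := by
      rw [hfp, ht]
      field_simp
      ring
    have hpmem : p ∈ line[ℝ, A, B] := (mem_line_iff_det3 hAB p).2 hfp0
    refine ⟨⟨p, hpmem, p, hpmem, ?_⟩, fun h => hfx ((mem_line_iff_det3 hAB x).1 h),
      fun h => hfy ((mem_line_iff_det3 hAB y).1 h)⟩
    have e1 : x -ᵥ p = t • (x - y) := by
      rw [vsub_eq_sub, hp]
      apply Prod.ext <;> simp [Prod.smul_def] <;> ring
    have e2 : p -ᵥ y = (1 - t) • (x - y) := by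
      rw [vsub_eq_sub, hp]
      apply Prod.ext <;> simp [Prod.smul_def] <;> ring
    rw [e1, e2]
    exact (SameRay.refl (x - y)).nonneg_smul_left ht0.le |>.nonneg_smul_right (by linarith)

lemma oddPos (x y z : ℝ) (hx : x ≠ 0) (hy : y ≠ 0) (hz : z ≠ 0) :
    Odd ((if 0 < x * y then 1 else 0) + (if 0 < y * z then 1 else 0)
      + (if 0 < x * z then 1 else 0) : ℕ) := by
  rcases hx.lt_or_gt with h1 | h1 <;> rcases hy.lt_or_gt with h2 | h2 <;>
      rcases hz.lt_or_gt with h3 | h3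
  · rw [if_pos (by nlinarith), if_pos (by nlinarith), if_pos (by nlinarith)]; decide
  · rw [if_pos (by nlinarith), if_neg (by intro h; nlinarith), if_neg (by intro h; nlinarith)]
    decide
  · rw [if_neg (by intro h; nlinarith), if_neg (by intro h; nlinarith), if_pos (by nlinarith)]
    decide
  · rw [if_neg (by intro h; nlinarith), if_pos (by nlinarith), if_neg (by intro h; nlinarith)]
    decide
  · rw [if_neg (by intro h; nlinarith), if_pos (by nlinarith), if_neg (by intro h; nlinarith)]
    decide
  · rw [if_neg (by intro h; nlinarith), if_neg (by intro h; nlinarith), if_pos (by nlinarith)]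
    decide
  · rw [if_pos (by nlinarith), if_neg (by intro h; nlinarith), if_neg (by intro h; nlinarith)]
    decide
  · rw [if_pos (by nlinarith), if_pos (by nlinarith), if_pos (by nlinarith)]; decide

lemma evenNeg (x y z : ℝ) (hx : x ≠ 0) (hy : y ≠ 0) (hz : z ≠ 0) :
    Even ((if x * y < 0 then 1 else 0) + (if y * z < 0 then 1 else 0)
      + (if x * z < 0 then 1 else 0) : ℕ) := by
  rcases hx.lt_or_gt with h1 | h1 <;> rcases hy.lt_or_gt with h2 | h2 <;>
      rcases hz.lt_or_gt with h3 | h3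
  · rw [if_neg (by intro h; nlinarith), if_neg (by intro h; nlinarith),
      if_neg (by intro h; nlinarith)]; decide
  · rw [if_neg (by intro h; nlinarith), if_pos (by nlinarith), if_pos (by nlinarith)]; decide
  · rw [if_pos (by nlinarith), if_pos (by nlinarith), if_neg (by intro h; nlinarith)]; decide
  · rw [if_pos (by nlinarith), if_neg (by intro h; nlinarith), if_pos (by nlinarith)]; decide
  · rw [if_pos (by nlinarith), if_neg (by intro h; nlinarith), if_pos (by nlinarith)]; decide
  · rw [if_pos (by nlinarith), if_pos (by nlinarith), if_neg (by intro h; nlinarith)]; decide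
  · rw [if_neg (by intro h; nlinarith), if_pos (by nlinarith), if_pos (by nlinarith)]; decide
  · rw [if_neg (by intro h; nlinarith), if_neg (by intro h; nlinarith),
      if_neg (by intro h; nlinarith)]; decide

def cnt (V : Finset (ℝ × ℝ)) (X Y : ℝ × ℝ) : ℕ :=
  ((Finset.powersetCard 2 V).filter
    (fun s : Finset (ℝ × ℝ) => (affineSpan ℝ (↑s : Set (ℝ × ℝ))).SOppSide X Y)).card

lemma sepCount_eq_cnt (Pts : Finset (ℝ × ℝ)) (P Q : ℝ × ℝ) :
    sepCount Pts P Q = cnt (Pts \ {P, Q}) P Q := by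
  unfold sepCount cnt
  have hbind : (do
      let a ← Finset.powersetCard 2 (Pts \ {P, Q})
      pure ((a : Finset (ℝ × ℝ)) : Set (ℝ × ℝ))) =
      (Finset.powersetCard 2 (Pts \ {P, Q})).image ((↑·) : Finset (ℝ × ℝ) → Set (ℝ × ℝ)) := by
    simp [Finset.bind_def, Finset.pure_def, Finset.biUnion_singleton]
    rfl
  rw [hbind, Finset.filter_image, Finset.card_image_of_injective _ Finset.coe_injective]

lemma cnt_symm (V : Finset (ℝ × ℝ)) (X Y : ℝ × ℝ) : cnt V X Y = cnt V Y X := by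
  unfold cnt
  congr 1
  apply Finset.filter_congr
  intro s _
  simp [AffineSubspace.sOppSide_comm]

lemma sepCount_symm (Pts : Finset (ℝ × ℝ)) (P Q : ℝ × ℝ) :
    sepCount Pts P Q = sepCount Pts Q P := by
  rw [sepCount_eq_cnt, sepCount_eq_cnt, Finset.pair_comm P Q, cnt_symm]

lemma cnt_insert {R : ℝ × ℝ} {V : Finset (ℝ × ℝ)} (hR : R ∉ V) (X Y : ℝ × ℝ) :
    cnt (insert R V) X Y = cnt V X Y +
      (V.filter (fun S => (affineSpan ℝ ({R, S} : Set (ℝ × ℝ))).SOppSide X Y)).card := by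
  unfold cnt
  have h2 : (2 : ℕ) = Nat.succ 1 := rfl
  rw [h2, Finset.powersetCard_succ_insert hR, Finset.filter_union]
  rw [Finset.card_union_of_disjoint]
  · congr 1
    rw [Finset.powersetCard_one, Finset.map_eq_image, Finset.image_image, Finset.filter_image]
    rw [Finset.card_image_of_injOn]
    · congr 1
      apply Finset.filter_congr
      intro S hS
      simp [Function.comp]
    · intro S hS T hT hST
      simp only [Finset.mem_coe, Finset.mem_filter] at hS hT
      have hSR : S ≠ R := fun h => hR (h ▸ hS.1)
      have h2 := hST
      simp only [Function.comp_apply, Function.Embedding.coeFn_mk] at h2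
      have hmem : S ∈ insert R ({T} : Finset (ℝ × ℝ)) := by
        rw [← h2]; simp
      simp only [Finset.mem_insert, Finset.mem_singleton] at hmem
      tauto
  · rw [Finset.disjoint_left]
    intro s hs hs'
    simp only [Finset.mem_filter, Finset.mem_powersetCard] at hs
    simp only [Finset.mem_filter, Finset.mem_image] at hs'
    obtain ⟨⟨hsub, _⟩, _⟩ := hs
    obtain ⟨⟨t, ht, rfl⟩, _⟩ := hs'
    exact hR (hsub (Finset.mem_insert_self R t))

lemma det3_ne_of_genpos {Pts : Finset (ℝ × ℝ)} (hgen : GenPos Pts) {A B C : ℝ × ℝ}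
    (hA : A ∈ Pts) (hB : B ∈ Pts) (hC : C ∈ Pts) (hAB : A ≠ B) (hAC : A ≠ C) (hBC : B ≠ C) :
    det3 A B C ≠ 0 := by
  intro h
  exact hgen A hA B hB C hC hAB hAC hBC ((collinear_iff_det3 A B C).2 h)

lemma tri_parity {Pts : Finset (ℝ × ℝ)} (hgen : GenPos Pts) {P Q R : ℝ × ℝ}
    (hP : P ∈ Pts) (hQ : Q ∈ Pts) (hR : R ∈ Pts)
    (hPQ : P ≠ Q) (hPR : P ≠ R) (hQR : Q ≠ R) (hn : Even Pts.card) :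
    Odd (sepCount Pts P Q + sepCount Pts Q R + sepCount Pts P R) := by
  classical
  set U : Finset (ℝ × ℝ) := Pts \ {P, Q, R} with hUdef
  have hUmem : ∀ x, x ∈ U ↔ x ∈ Pts ∧ x ≠ P ∧ x ≠ Q ∧ x ≠ R := by
    intro x
    simp [hUdef, Finset.mem_sdiff, not_or]
  have hPU : P ∉ U := fun h => ((hUmem P).1 h).2.1 rfl
  have hQU : Q ∉ U := fun h => ((hUmem Q).1 h).2.2.1 rfl
  have hRU : R ∉ U := fun h => ((hUmem R).1 h).2.2.2 rfl
  have e1 : Pts \ {P, Q} = insert R U := by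
    ext x
    simp only [Finset.mem_sdiff, Finset.mem_insert, Finset.mem_singleton, hUmem, not_or]
    constructor
    · rintro ⟨hx, hxP, hxQ⟩
      by_cases hxR : x = R
      · exact Or.inl hxR
      · exact Or.inr ⟨hx, hxP, hxQ, hxR⟩
    · rintro (rfl | ⟨hx, hxP, hxQ, _⟩)
      · exact ⟨hR, fun h => hPR h.symm, fun h => hQR h.symm⟩
      · exact ⟨hx, hxP, hxQ⟩
  have e2 : Pts \ {Q, R} = insert P U := by
    ext x
    simp only [Finset.mem_sdiff, Finset.mem_insert, Finset.mem_singleton, hUmem, not_or]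
    constructor
    · rintro ⟨hx, hxQ, hxR⟩
      by_cases hxP : x = P
      · exact Or.inl hxP
      · exact Or.inr ⟨hx, hxP, hxQ, hxR⟩
    · rintro (rfl | ⟨hx, _, hxQ, hxR⟩)
      · exact ⟨hP, hPQ, hPR⟩
      · exact ⟨hx, hxQ, hxR⟩
  have e3 : Pts \ {P, R} = insert Q U := by
    ext x
    simp only [Finset.mem_sdiff, Finset.mem_insert, Finset.mem_singleton, hUmem, not_or]
    constructor
    · rintro ⟨hx, hxP, hxR⟩
      by_cases hxQ : x = Q
      · exact Or.inl hxQ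
      · exact Or.inr ⟨hx, hxP, hxQ, hxR⟩
    · rintro (rfl | ⟨hx, hxP, _, hxR⟩)
      · exact ⟨hQ, fun h => hPQ h.symm, hQR⟩
      · exact ⟨hx, hxP, hxR⟩
  have hU : U ⊆ Pts := Finset.sdiff_subset
  rw [sepCount_eq_cnt, sepCount_eq_cnt, sepCount_eq_cnt, e1, e2, e3,
    cnt_insert hRU, cnt_insert hPU, cnt_insert hQU]
  have hEven : Even (cnt U P Q + cnt U Q R + cnt U P R) := by
    unfold cnt
    rw [Finset.card_filter, Finset.card_filter, Finset.card_filter,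
      ← Finset.sum_add_distrib, ← Finset.sum_add_distrib]
    apply Finset.even_sum
    intro t ht
    rw [Finset.mem_powersetCard] at ht
    obtain ⟨hsub, hc2⟩ := ht
    obtain ⟨R', S', hne, rfl⟩ := Finset.card_eq_two.mp hc2
    have hR' : R' ∈ U := hsub (by simp)
    have hS' : S' ∈ U := hsub (by simp)
    obtain ⟨hR'P, hR'1, hR'2, hR'3⟩ := (hUmem R').1 hR'
    obtain ⟨hS'P, hS'1, hS'2, hS'3⟩ := (hUmem S').1 hS'
    have hset : ((({R', S'} : Finset (ℝ × ℝ)) : Set (ℝ × ℝ))) = ({R', S'} : Set (ℝ × ℝ)) := by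
      try simp
    simp only [hset, sOppSide_iff_det3 hne]
    exact evenNeg _ _ _
      (det3_ne_of_genpos hgen hR'P hS'P hP hne hR'1 hS'1)
      (det3_ne_of_genpos hgen hR'P hS'P hQ hne hR'2 hS'2)
      (det3_ne_of_genpos hgen hR'P hS'P hR hne hR'3 hS'3)
  have hOdd : Odd ((U.filter (fun S => (affineSpan ℝ ({R, S} : Set (ℝ × ℝ))).SOppSide P Q)).card
      + (U.filter (fun S => (affineSpan ℝ ({P, S} : Set (ℝ × ℝ))).SOppSide Q R)).card
      + (U.filter (fun S => (affineSpan ℝ ({Q, S} : Set (ℝ × ℝ))).SOppSide P R)).card) := by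
    rw [Finset.card_filter, Finset.card_filter, Finset.card_filter,
      ← Finset.sum_add_distrib, ← Finset.sum_add_distrib]
    rw [Finset.odd_sum_iff_odd_card_odd]
    have hall : (U.filter fun S => Odd
        ((if (affineSpan ℝ ({R, S} : Set (ℝ × ℝ))).SOppSide P Q then 1 else 0) +
         (if (affineSpan ℝ ({P, S} : Set (ℝ × ℝ))).SOppSide Q R then 1 else 0) +
         (if (affineSpan ℝ ({Q, S} : Set (ℝ × ℝ))).SOppSide P R then 1 else 0))) = U := by
      apply Finset.filter_eq_self.2
      intro S hS
      obtain ⟨hSP, hS1, hS2, hS3⟩ := (hUmem S).1 hS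
      have hRS : R ≠ S := fun h => hS3 h.symm
      have hPS : P ≠ S := fun h => hS1 h.symm
      have hQS : Q ≠ S := fun h => hS2 h.symm
      have ha : det3 S P Q ≠ 0 :=
        det3_ne_of_genpos hgen hSP hP hQ (Ne.symm hPS) (Ne.symm hQS) hPQ
      have hb : det3 S Q R ≠ 0 :=
        det3_ne_of_genpos hgen hSP hQ hR (Ne.symm hQS) (Ne.symm hRS) hQR
      have hc : det3 S R P ≠ 0 :=
        det3_ne_of_genpos hgen hSP hR hP (Ne.symm hRS) (Ne.symm hPS) (Ne.symm hPR)
      have eA : det3 R S P * det3 R S Q = -(det3 S Q R * det3 S R P) := by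
        unfold det3; ring
      have eB : det3 P S Q * det3 P S R = -(det3 S R P * det3 S P Q) := by
        unfold det3; ring
      have eC : det3 Q S P * det3 Q S R = -(det3 S Q R * det3 S P Q) := by
        unfold det3; ring
      simp only [sOppSide_iff_det3 hRS, sOppSide_iff_det3 hPS, sOppSide_iff_det3 hQS,
        eA, eB, eC, neg_lt_zero]
      have := oddPos (det3 S Q R) (det3 S R P) (det3 S P Q) hb hc ha
      exact this
    rw [hall]
    have hsub3 : ({P, Q, R} : Finset (ℝ × ℝ)) ⊆ Pts := by
      intro x hx
      simp only [Finset.mem_insert, Finset.mem_singleton] at hx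
      rcases hx with rfl | rfl | rfl <;> assumption
    have hc3 : ({P, Q, R} : Finset (ℝ × ℝ)).card = 3 := by
      rw [Finset.card_insert_of_notMem (by simp [hPQ, hPR]),
        Finset.card_insert_of_notMem (by simp [hQR])]
      try simp
    have hUcard : U.card = Pts.card - 3 := by
      rw [hUdef, Finset.card_sdiff_of_subset hsub3, hc3]
    obtain ⟨k, hk⟩ := hn
    have h3le : 3 ≤ Pts.card := hc3 ▸ Finset.card_le_card hsub3
    rw [Nat.odd_iff, hUcard]
    omega
  obtain ⟨a, ha⟩ := hEven
  obtain ⟨b, hb⟩ := hOdd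
  rw [Nat.odd_iff]
  omega

lemma zmod2_cases (x : ZMod 2) : x = 0 ∨ x = 1 := by revert x; decide

lemma pair_eq_pair_iff {P Q P' Q' : ℝ × ℝ} (hPQ : P ≠ Q) (h'' : P' ≠ Q')
    (h : ({P, Q} : Finset (ℝ × ℝ)) = {P', Q'}) :
    (P' = P ∧ Q' = Q) ∨ (P' = Q ∧ Q' = P) := by
  have h1 : P' ∈ ({P, Q} : Finset (ℝ × ℝ)) := by rw [h]; simp
  have h2 : Q' ∈ ({P, Q} : Finset (ℝ × ℝ)) := by rw [h]; simp
  simp only [Finset.mem_insert, Finset.mem_singleton] at h1 h2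
  rcases h1 with rfl | rfl <;> rcases h2 with rfl | rfl <;> tauto

/-- If `n` is even, then for some `0 ≤ i ≤ n` exactly `i * (n - i)` of the unordered pairs
of distinct points of the configuration have an even number of separating lines, and the
remaining pairs have an odd number of separating lines. -/
theorem even_card_even_sepCount (n : ℕ) (Pts : Finset (ℝ × ℝ))
    (hgen : GenPos Pts) (hcard : Pts.card = n) (hn : Even n) :
    ∃ i ≤ n,
      ((Finset.powersetCard 2 Pts).filter
        (fun s => ∃ P Q : ℝ × ℝ, P ≠ Q ∧ s = {P, Q} ∧ Even (sepCount Pts P Q))).card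
        = i * (n - i) ∧
      ((Finset.powersetCard 2 Pts).filter
        (fun s => ∃ P Q : ℝ × ℝ, P ≠ Q ∧ s = {P, Q} ∧ Odd (sepCount Pts P Q))).card
        = n.choose 2 - i * (n - i) := by
  classical
  rcases Nat.eq_zero_or_pos n with rfl | hpos
  · refine ⟨0, le_refl 0, ?_, ?_⟩ <;>
    · rw [Finset.card_eq_zero.mp hcard,
        show Finset.powersetCard 2 (∅ : Finset (ℝ × ℝ)) = ∅ from
          Finset.powersetCard_eq_empty.2 (by simp), Finset.filter_empty, Finset.card_empty]
      try simp
  -- main case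
  have hne : Pts.Nonempty := Finset.card_pos.mp (hcard ▸ hpos)
  obtain ⟨P₀, hP₀⟩ := hne
  set g : ℝ × ℝ → ZMod 2 := fun X => if X = P₀ then 1 else (sepCount Pts P₀ X : ZMod 2)
    with hg
  -- the key parity characterization
  have hkey : ∀ P ∈ Pts, ∀ Q ∈ Pts, P ≠ Q → (Even (sepCount Pts P Q) ↔ g P ≠ g Q) := by
    have haux : ∀ P ∈ Pts, ∀ Q ∈ Pts, P ≠ Q → P = P₀ →
        (Even (sepCount Pts P Q) ↔ g P ≠ g Q) := by
      intro P hP Q hQ hPQ hPP₀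
      subst hPP₀
      have hgP : g P = 1 := by rw [hg]; simp
      have hgQ : g Q = (sepCount Pts P Q : ZMod 2) := by
        rw [hg]; simp [Ne.symm hPQ]
      rw [hgP, hgQ, ← ZMod.natCast_eq_zero_iff_even]
      rcases zmod2_cases ((sepCount Pts P Q : ZMod 2)) with h | h <;> rw [h] <;> simp <;> decide
    intro P hP Q hQ hPQ
    by_cases hPP₀ : P = P₀
    · exact haux P hP Q hQ hPQ hPP₀
    by_cases hQP₀ : Q = P₀
    · rw [sepCount_symm, ne_comm]
      exact haux Q hQ P hP (Ne.symm hPQ) hQP₀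
    · -- both different from P₀
      have htri := tri_parity hgen hP₀ hP hQ (fun h => hPP₀ h.symm) (fun h => hQP₀ h.symm)
        hPQ (hcard ▸ hn)
      have hgP : g P = (sepCount Pts P₀ P : ZMod 2) := by rw [hg]; simp [hPP₀]
      have hgQ : g Q = (sepCount Pts P₀ Q : ZMod 2) := by rw [hg]; simp [hQP₀]
      rw [← ZMod.natCast_eq_one_iff_odd] at htri
      push_cast at htri
      rw [← ZMod.natCast_eq_zero_iff_even, hgP, hgQ]
      revert htri
      generalize (sepCount Pts P₀ P : ZMod 2) = x
      generalize (sepCount Pts P Q : ZMod 2) = y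
      generalize (sepCount Pts P₀ Q : ZMod 2) = z
      revert x y z
      decide
  -- the coloring classes
  set A : Finset (ℝ × ℝ) := Pts.filter (fun X => g X = 0) with hA
  set B : Finset (ℝ × ℝ) := Pts.filter (fun X => ¬ g X = 0) with hB
  have hABcard : A.card + B.card = n := by
    rw [hA, hB, Finset.card_filter_add_card_filter_not, hcard]
  have hAn : A.card ≤ n := by omega
  have hBn : B.card = n - A.card := by omega
  -- the even filter has card |A| * |B|
  have hEcard : (A ×ˢ B).card =
      ((Finset.powersetCard 2 Pts).filter
        (fun s => ∃ P Q : ℝ × ℝ, P ≠ Q ∧ s = {P, Q} ∧ Even (sepCount Pts P Q))).card := by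
    apply Finset.card_bij (fun (p : (ℝ × ℝ) × (ℝ × ℝ)) _ => ({p.1, p.2} : Finset (ℝ × ℝ)))
    · rintro ⟨a, b⟩ hab
      rw [Finset.mem_product] at hab
      obtain ⟨ha, hb⟩ := hab
      rw [hA, Finset.mem_filter] at ha
      rw [hB, Finset.mem_filter] at hb
      have hgb : g b = 1 := (zmod2_cases (g b)).resolve_left hb.2
      have hne : a ≠ b := fun h => hb.2 (h ▸ ha.2)
      rw [Finset.mem_filter]
      refine ⟨Finset.mem_powersetCard.2 ⟨?_, ?_⟩, a, b, hne, rfl, ?_⟩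
      · intro x hx
        simp only [Finset.mem_insert, Finset.mem_singleton] at hx
        rcases hx with rfl | rfl
        · exact ha.1
        · exact hb.1
      · exact Finset.card_pair hne
      · exact (hkey a ha.1 b hb.1 hne).2 (by rw [ha.2, hgb]; decide)
    · rintro ⟨a, b⟩ hab ⟨c, d⟩ hcd heq
      rw [Finset.mem_product] at hab hcd
      obtain ⟨ha, hb⟩ := hab
      obtain ⟨hc, hd⟩ := hcd
      rw [hA, Finset.mem_filter] at ha hc
      rw [hB, Finset.mem_filter] at hb hd
      have hab' : a ≠ b := fun h => hb.2 (h ▸ ha.2)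
      have hcd' : c ≠ d := fun h => hd.2 (h ▸ hc.2)
      simp only at heq
      rcases pair_eq_pair_iff hab' hcd' heq with ⟨h1, h2⟩ | ⟨h1, h2⟩
      · rw [Prod.mk.injEq]; exact ⟨h1.symm, h2.symm⟩
      · exfalso; exact hb.2 (h1 ▸ hc.2)
    · intro s hs
      rw [Finset.mem_filter] at hs
      obtain ⟨hmem, P, Q, hPQ, rfl, heven⟩ := hs
      have hsub := (Finset.mem_powersetCard.1 hmem).1
      have hP : P ∈ Pts := hsub (by simp)
      have hQ : Q ∈ Pts := hsub (by simp)
      have hgne : g P ≠ g Q := (hkey P hP Q hQ hPQ).1 heven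
      rcases zmod2_cases (g P) with hgP | hgP
      · have hgQ : g Q ≠ 0 := fun h => hgne (hgP.trans h.symm)
        refine ⟨(P, Q), ?_, rfl⟩
        rw [Finset.mem_product]
        exact ⟨by rw [hA, Finset.mem_filter]; exact ⟨hP, hgP⟩,
          by rw [hB, Finset.mem_filter]; exact ⟨hQ, hgQ⟩⟩
      · have hgQ : g Q = 0 := by
          rcases zmod2_cases (g Q) with h | h
          · exact h
          · exact absurd (hgP.trans h.symm) hgne
        have hgP' : g P ≠ 0 := by rw [hgP]; decide
        refine ⟨(Q, P), ?_, ?_⟩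
        · rw [Finset.mem_product]
          exact ⟨by rw [hA, Finset.mem_filter]; exact ⟨hQ, hgQ⟩,
            by rw [hB, Finset.mem_filter]; exact ⟨hP, hgP'⟩⟩
        · simp only
          rw [Finset.pair_comm]
  -- the odd filter is the complement of the even filter
  have hodd_eq : ((Finset.powersetCard 2 Pts).filter
        (fun s => ∃ P Q : ℝ × ℝ, P ≠ Q ∧ s = {P, Q} ∧ Odd (sepCount Pts P Q)))
      = Finset.powersetCard 2 Pts \
        ((Finset.powersetCard 2 Pts).filter
          (fun s => ∃ P Q : ℝ × ℝ, P ≠ Q ∧ s = {P, Q} ∧ Even (sepCount Pts P Q))) := by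
    ext s
    simp only [Finset.mem_sdiff, Finset.mem_filter]
    constructor
    · rintro ⟨hmem, P, Q, hPQ, rfl, hodd⟩
      refine ⟨hmem, fun hcon => ?_⟩
      obtain ⟨-, P', Q', hPQ', heq', heven'⟩ := hcon
      have hsep : sepCount Pts P' Q' = sepCount Pts P Q := by
        rcases pair_eq_pair_iff hPQ hPQ' heq' with ⟨h1, h2⟩ | ⟨h1, h2⟩
        · rw [h1, h2]
        · rw [h1, h2, sepCount_symm]
      rw [hsep] at heven'
      exact (Nat.not_odd_iff_even.2 heven') hodd
    · rintro ⟨hmem, hnot⟩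
      refine ⟨hmem, ?_⟩
      obtain ⟨P, Q, hPQ, rfl⟩ := Finset.card_eq_two.1 (Finset.mem_powersetCard.1 hmem).2
      refine ⟨P, Q, hPQ, rfl, ?_⟩
      rcases Nat.even_or_odd (sepCount Pts P Q) with he | ho
      · exact absurd ⟨hmem, P, Q, hPQ, rfl, he⟩ hnot
      · exact ho
  refine ⟨A.card, hAn, ?_, ?_⟩
  · rw [← hEcard, Finset.card_product, hBn]
  · rw [hodd_eq, Finset.card_sdiff_of_subset (Finset.filter_subset _ _), ← hEcard,
      Finset.card_product, hBn, Finset.card_powersetCard, hcard]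

end
end

section
/- Let 𝒫 be a configuration of n points in general position in the plane, and let P, Q, R be three pairwise distinct points of 𝒫. If n(P,Q) ≡ n(Q,R) (mod 2), then n(P,R) ≡ n−1 (mod 2). -/
open scoped Classical

noncomputable section

def dd (A B C : ℝ × ℝ) : ℝ := (B.1 - A.1) * (C.2 - A.2) - (B.2 - A.2) * (C.1 - A.1)

lemma mem_line_iff {A B x : ℝ × ℝ} (hAB : A ≠ B) :
    x ∈ affineSpan ℝ ({A, B} : Set (ℝ × ℝ)) ↔ dd A B x = 0 := by
  have hmem : x ∈ affineSpan ℝ ({A, B} : Set (ℝ × ℝ)) ↔ ∃ r : ℝ, r • (B - A) = x - A := by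
    simpa using vadd_left_mem_affineSpan_pair (k := ℝ) (p₁ := A) (p₂ := B) (v := x - A)
  rw [hmem]
  constructor
  · rintro ⟨r, hr⟩
    have h1 := congrArg Prod.fst hr
    have h2 := congrArg Prod.snd hr
    simp only [Prod.smul_fst, Prod.smul_snd, Prod.fst_sub, Prod.snd_sub, smul_eq_mul] at h1 h2
    unfold dd
    linear_combination (B.2 - A.2) * h1 - (B.1 - A.1) * h2
  · intro hd
    unfold dd at hd
    rcases ne_or_eq B.1 A.1 with h1 | h1
    · have hne : B.1 - A.1 ≠ 0 := sub_ne_zero.mpr h1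
      refine ⟨(x.1 - A.1) / (B.1 - A.1), ?_⟩
      apply Prod.ext <;>
        simp only [Prod.smul_fst, Prod.smul_snd, Prod.fst_sub, Prod.snd_sub, smul_eq_mul] <;>
        field_simp <;> linear_combination -hd
    · have h2 : B.2 - A.2 ≠ 0 := by
        intro h2
        exact hAB (Prod.ext h1.symm (by linarith [sub_eq_zero.mp h2]))
      refine ⟨(x.2 - A.2) / (B.2 - A.2), ?_⟩
      apply Prod.ext <;>
        simp only [Prod.smul_fst, Prod.smul_snd, Prod.fst_sub, Prod.snd_sub, smul_eq_mul] <;>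
        field_simp <;> linear_combination hd

lemma dd_ne_of_not_collinear {A B C : ℝ × ℝ} (hAB : A ≠ B)
    (h : ¬ Collinear ℝ ({A, B, C} : Set (ℝ × ℝ))) : dd A B C ≠ 0 := by
  intro hd
  apply h
  have hmem : C ∈ affineSpan ℝ ({A, B} : Set (ℝ × ℝ)) := (mem_line_iff hAB).mpr hd
  have := collinear_insert_of_mem_affineSpan_pair (k := ℝ) hmem
  have hset : ({A, B, C} : Set (ℝ × ℝ)) = {C, A, B} := by
    ext x; simp; tauto
  rwa [hset]

lemma sOppSide_iff {A B P Q : ℝ × ℝ} (hAB : A ≠ B) :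
    (affineSpan ℝ ({A, B} : Set (ℝ × ℝ))).SOppSide P Q ↔ dd A B P * dd A B Q < 0 := by
  constructor
  · rintro ⟨⟨p₁, hp₁, p₂, hp₂, hray⟩, hPn, hQn⟩
    have hdP : dd A B P ≠ 0 := fun h => hPn ((mem_line_iff hAB).mpr h)
    have hdQ : dd A B Q ≠ 0 := fun h => hQn ((mem_line_iff hAB).mpr h)
    have hd1 : dd A B p₁ = 0 := (mem_line_iff hAB).mp hp₁
    have hd2 : dd A B p₂ = 0 := (mem_line_iff hAB).mp hp₂
    rcases hray with h0 | h0 | ⟨r₁, r₂, hr₁, hr₂, heq⟩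
    · exfalso
      apply hPn
      have : P = p₁ := by
        have := sub_eq_zero.mp (by simpa [vsub_eq_sub] using h0)
        exact this
      rwa [this]
    · exfalso
      apply hQn
      have : Q = p₂ := by
        have := sub_eq_zero.mp (by simpa [vsub_eq_sub, sub_eq_zero] using h0)
        exact this.symm
      rwa [this]
    · have h1 := congrArg Prod.fst heq
      have h2 := congrArg Prod.snd heq
      simp only [Prod.smul_fst, Prod.smul_snd, vsub_eq_sub, Prod.fst_sub, Prod.snd_sub,
        smul_eq_mul] at h1 h2
      have key : r₁ * dd A B P = - (r₂ * dd A B Q) := by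
        unfold dd at hd1 hd2 ⊢
        linear_combination (B.1 - A.1) * h2 - (B.2 - A.2) * h1 + r₁ * hd1 + r₂ * hd2
      have key2 : r₁ * (dd A B P * dd A B Q) = -(r₂ * (dd A B Q * dd A B Q)) := by
        linear_combination dd A B Q * key
      have hneg : r₁ * (dd A B P * dd A B Q) < 0 := by
        rw [key2]; nlinarith [mul_pos hr₂ (mul_self_pos.mpr hdQ)]
      have := div_neg_of_neg_of_pos hneg hr₁
      rwa [mul_div_cancel_left₀ _ (ne_of_gt hr₁)] at this
  · intro hlt
    have hdP : dd A B P ≠ 0 := by intro h; rw [h] at hlt; simp at hlt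
    have hdQ : dd A B Q ≠ 0 := by intro h; rw [h] at hlt; simp at hlt
    have hne : dd A B P - dd A B Q ≠ 0 := by
      rcases mul_neg_iff.mp hlt with ⟨h1, h2⟩ | ⟨h1, h2⟩ <;> intro h <;> nlinarith
    set t : ℝ := dd A B P / (dd A B P - dd A B Q) with ht
    have ht0 : 0 < t := by
      rcases mul_neg_iff.mp hlt with ⟨h1, h2⟩ | ⟨h1, h2⟩
      · exact div_pos h1 (by linarith)
      · exact div_pos_of_neg_of_neg h1 (by linarith)
    have ht1 : t < 1 := by
      rw [ht]
      rcases mul_neg_iff.mp hlt with ⟨h1, h2⟩ | ⟨h1, h2⟩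
      · rw [div_lt_one (by linarith)]; linarith
      · rw [div_lt_one_iff]; right; right; constructor <;> linarith
    set p : ℝ × ℝ := ⟨P.1 + t * (Q.1 - P.1), P.2 + t * (Q.2 - P.2)⟩ with hp
    have hpmem : p ∈ affineSpan ℝ ({A, B} : Set (ℝ × ℝ)) := by
      rw [mem_line_iff hAB]
      have : dd A B p = dd A B P + t * (dd A B Q - dd A B P) := by unfold dd; simp [hp]; ring
      rw [this, ht]
      field_simp
      ring
    refine ⟨⟨p, hpmem, p, hpmem, ?_⟩, fun h => hdP ((mem_line_iff hAB).mp h),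
      fun h => hdQ ((mem_line_iff hAB).mp h)⟩
    have e1 : P -ᵥ p = t • (P - Q) := by
      apply Prod.ext <;> simp [hp, vsub_eq_sub] <;> ring
    have e2 : p -ᵥ Q = (1 - t) • (P - Q) := by
      apply Prod.ext <;> simp [hp, vsub_eq_sub] <;> ring
    rw [e1, e2]
    exact (SameRay.refl _).nonneg_smul_left ht0.le |>.nonneg_smul_right (by linarith)

lemma parity_even_aux (a b c : ℝ) (ha : a ≠ 0) (hb : b ≠ 0) (hc : c ≠ 0) :
    ((if a * b < 0 then 1 else 0) + (if b * c < 0 then 1 else 0)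
      + (if a * c < 0 then 1 else 0) : ZMod 2) = 0 := by
  rcases ha.lt_or_gt with ha' | ha' <;> rcases hb.lt_or_gt with hb' | hb' <;>
    rcases hc.lt_or_gt with hc' | hc' <;>
    simp [mul_neg_iff, ha', hb', hc', asymm ha', asymm hb', asymm hc'] <;> decide

lemma parity_odd_aux (x y z : ℝ) (hx : x ≠ 0) (hy : y ≠ 0) (hz : z ≠ 0) :
    ((if -(z * y) < 0 then 1 else 0) + (if -(x * z) < 0 then 1 else 0)
      + (if -(x * y) < 0 then 1 else 0) : ZMod 2) = 1 := by
  simp only [neg_lt_zero]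
  rcases hx.lt_or_gt with hx' | hx' <;> rcases hy.lt_or_gt with hy' | hy' <;>
    rcases hz.lt_or_gt with hz' | hz' <;>
    simp [mul_pos_iff, hx', hy', hz', asymm hx', asymm hy', asymm hz'] <;> decide

lemma parity_odd_dd (S P Q R : ℝ × ℝ) (h1 : dd S P Q ≠ 0) (h2 : dd S Q R ≠ 0)
    (h3 : dd S R P ≠ 0) :
    ((if dd R S P * dd R S Q < 0 then 1 else 0) + (if dd P S Q * dd P S R < 0 then 1 else 0)
      + (if dd Q S P * dd Q S R < 0 then 1 else 0) : ZMod 2) = 1 := by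
  have e1 : dd R S P * dd R S Q = -(dd S R P * dd S Q R) := by unfold dd; ring
  have e2 : dd P S Q * dd P S R = -(dd S P Q * dd S R P) := by unfold dd; ring
  have e3 : dd Q S P * dd Q S R = -(dd S P Q * dd S Q R) := by unfold dd; ring
  rw [e1, e2, e3]
  have := parity_odd_aux (dd S P Q) (dd S Q R) (dd S R P) h1 h2 h3
  rw [show dd S R P * dd S Q R = dd S Q R * dd S R P from mul_comm _ _] at this ⊢
  convert this using 3 <;> ring_nf

lemma sep_split {U : Finset (ℝ × ℝ)} {C : ℝ × ℝ} (hC : C ∉ U) (X Y : ℝ × ℝ) :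
    ((Finset.powersetCard 2 (insert C U)).filter
        (fun (s : Finset (ℝ × ℝ)) => (affineSpan ℝ (↑s : Set (ℝ × ℝ))).SOppSide X Y)).card
      = ((Finset.powersetCard 2 U).filter
          (fun (s : Finset (ℝ × ℝ)) => (affineSpan ℝ (↑s : Set (ℝ × ℝ))).SOppSide X Y)).card
        + (U.filter
            (fun S => (affineSpan ℝ ({C, S} : Set (ℝ × ℝ))).SOppSide X Y)).card := by
  rw [Finset.powersetCard_succ_insert hC, Finset.filter_union]
  rw [Finset.card_union_of_disjoint]
  · congr 1
    have h1 : Finset.powersetCard 1 U = U.image (fun a => ({a} : Finset (ℝ × ℝ))) := by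
      ext s
      simp only [Finset.mem_powersetCard, Finset.mem_image]
      constructor
      · rintro ⟨hsub, hcard⟩
        obtain ⟨a, rfl⟩ := Finset.card_eq_one.mp hcard
        exact ⟨a, by simpa using hsub, rfl⟩
      · rintro ⟨a, ha, rfl⟩
        exact ⟨by simpa using ha, rfl⟩
    rw [h1, Finset.image_image, Finset.filter_image, Finset.card_image_of_injOn]
    · congr 1
      apply Finset.filter_congr
      intro S hS
      simp [Function.comp]
    · intro a ha b hb hab
      simp only [Function.comp] at hab
      have haU : a ∈ U := (Finset.mem_filter.mp ha).1
      have haC : a ≠ C := fun h => hC (h ▸ haU)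
      have : a ∈ (insert C {b} : Finset (ℝ × ℝ)) := by rw [← hab]; simp
      simp only [Finset.mem_insert, Finset.mem_singleton] at this
      tauto
  · rw [Finset.disjoint_left]
    intro s hs hs'
    simp only [Finset.mem_filter, Finset.mem_powersetCard] at hs
    simp only [Finset.mem_filter, Finset.mem_image] at hs'
    obtain ⟨⟨t, ht, rfl⟩, _⟩ := hs'
    exact hC (hs.1.1 (by simp))

lemma card_filter_coeM (F : Finset (Finset (ℝ × ℝ))) (p : Set (ℝ × ℝ) → Prop) :
    (Finset.filter p (F >>= fun a => pure (↑a : Set (ℝ × ℝ)))).card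
      = (F.filter (fun (s : Finset (ℝ × ℝ)) => p (↑s : Set (ℝ × ℝ)))).card := by
  have hco : (F >>= fun a => pure (↑a : Set (ℝ × ℝ)))
      = F.image (fun (s : Finset (ℝ × ℝ)) => (↑s : Set (ℝ × ℝ))) :=
    Finset.sup_singleton_apply _ _
  rw [hco, Finset.filter_image, Finset.card_image_of_injOn]
  intro a _ b _ hab
  exact Finset.coe_injective hab


/-- If `n(P,Q) ≡ n(Q,R) (mod 2)` for three pairwise distinct points `P`, `Q`, `R` of a
configuration of `n` points in general position, then `n(P,R) ≡ n - 1 (mod 2)`. -/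
theorem sepCount_modeq_of_modeq (n : ℕ) (Pts : Finset (ℝ × ℝ))
    (hgen : GenPos Pts) (hcard : Pts.card = n)
    (P Q R : ℝ × ℝ) (hP : P ∈ Pts) (hQ : Q ∈ Pts) (hR : R ∈ Pts)
    (hPQ : P ≠ Q) (hPR : P ≠ R) (hQR : Q ≠ R)
    (h : sepCount Pts P Q ≡ sepCount Pts Q R [MOD 2]) :
    sepCount Pts P R ≡ n - 1 [MOD 2] := by
  have hd : ∀ X ∈ Pts, ∀ Y ∈ Pts, ∀ Z ∈ Pts, X ≠ Y → X ≠ Z → Y ≠ Z → dd X Y Z ≠ 0 := by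
    intro X hX Y hY Z hZ h1 h2 h3
    exact dd_ne_of_not_collinear h1 (hgen X hX Y hY Z hZ h1 h2 h3)
  set T : Finset (ℝ × ℝ) := Pts \ {P, Q, R} with hT
  have hmemT : ∀ x, x ∈ T ↔ x ∈ Pts ∧ x ≠ P ∧ x ≠ Q ∧ x ≠ R := by
    intro x
    simp only [hT, Finset.mem_sdiff, Finset.mem_insert, Finset.mem_singleton]
    tauto
  have hRT : R ∉ T := by simp [hmemT]
  have hPT : P ∉ T := by simp [hmemT]
  have hQT : Q ∉ T := by simp [hmemT]
  have hRP : R ≠ P := hPR.symm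
  have hRQ : R ≠ Q := hQR.symm
  have hQP : Q ≠ P := hPQ.symm
  have ePQ : Pts \ ({P, Q} : Finset (ℝ × ℝ)) = insert R T := by
    ext x
    simp only [Finset.mem_sdiff, Finset.mem_insert, Finset.mem_singleton, hmemT]
    constructor
    · rintro ⟨hx, hne⟩
      by_cases hxR : x = R
      · exact Or.inl hxR
      · exact Or.inr ⟨hx, by tauto, by tauto, hxR⟩
    · rintro (rfl | ⟨hx, h1, h2, h3⟩)
      · exact ⟨hR, by tauto⟩
      · exact ⟨hx, by tauto⟩
  have eQR : Pts \ ({Q, R} : Finset (ℝ × ℝ)) = insert P T := by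
    ext x
    simp only [Finset.mem_sdiff, Finset.mem_insert, Finset.mem_singleton, hmemT]
    constructor
    · rintro ⟨hx, hne⟩
      by_cases hxP : x = P
      · exact Or.inl hxP
      · exact Or.inr ⟨hx, hxP, by tauto, by tauto⟩
    · rintro (rfl | ⟨hx, h1, h2, h3⟩)
      · exact ⟨hP, by tauto⟩
      · exact ⟨hx, by tauto⟩
  have ePR : Pts \ ({P, R} : Finset (ℝ × ℝ)) = insert Q T := by
    ext x
    simp only [Finset.mem_sdiff, Finset.mem_insert, Finset.mem_singleton, hmemT]
    constructor
    · rintro ⟨hx, hne⟩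
      by_cases hxQ : x = Q
      · exact Or.inl hxQ
      · exact Or.inr ⟨hx, by tauto, hxQ, by tauto⟩
    · rintro (rfl | ⟨hx, h1, h2, h3⟩)
      · exact ⟨hQ, by tauto⟩
      · exact ⟨hx, by tauto⟩
  -- split each sepCount
  have s1 : sepCount Pts P Q
      = ((Finset.powersetCard 2 T).filter
          (fun (s : Finset (ℝ × ℝ)) => (affineSpan ℝ (↑s : Set (ℝ × ℝ))).SOppSide P Q)).card
        + (T.filter (fun S => (affineSpan ℝ ({R, S} : Set (ℝ × ℝ))).SOppSide P Q)).card := by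
    unfold sepCount; rw [ePQ, card_filter_coeM]; exact sep_split hRT P Q
  have s2 : sepCount Pts Q R
      = ((Finset.powersetCard 2 T).filter
          (fun (s : Finset (ℝ × ℝ)) => (affineSpan ℝ (↑s : Set (ℝ × ℝ))).SOppSide Q R)).card
        + (T.filter (fun S => (affineSpan ℝ ({P, S} : Set (ℝ × ℝ))).SOppSide Q R)).card := by
    unfold sepCount; rw [eQR, card_filter_coeM]; exact sep_split hPT Q R
  have s3 : sepCount Pts P R
      = ((Finset.powersetCard 2 T).filter
          (fun (s : Finset (ℝ × ℝ)) => (affineSpan ℝ (↑s : Set (ℝ × ℝ))).SOppSide P R)).card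
        + (T.filter (fun S => (affineSpan ℝ ({Q, S} : Set (ℝ × ℝ))).SOppSide P R)).card := by
    unfold sepCount; rw [ePR, card_filter_coeM]; exact sep_split hQT P R
  -- A-part parity
  have hA : ((((Finset.powersetCard 2 T).filter
          (fun (s : Finset (ℝ × ℝ)) => (affineSpan ℝ (↑s : Set (ℝ × ℝ))).SOppSide P Q)).card : ZMod 2)
        + (((Finset.powersetCard 2 T).filter
          (fun (s : Finset (ℝ × ℝ)) => (affineSpan ℝ (↑s : Set (ℝ × ℝ))).SOppSide Q R)).card : ZMod 2)
        + (((Finset.powersetCard 2 T).filter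
          (fun (s : Finset (ℝ × ℝ)) => (affineSpan ℝ (↑s : Set (ℝ × ℝ))).SOppSide P R)).card : ZMod 2)) = 0 := by
    rw [Finset.card_filter, Finset.card_filter, Finset.card_filter]
    push_cast
    rw [← Finset.sum_add_distrib, ← Finset.sum_add_distrib]
    apply Finset.sum_eq_zero
    intro s hs
    rw [Finset.mem_powersetCard] at hs
    obtain ⟨hsub, hc⟩ := hs
    obtain ⟨X, Y, hXY, rfl⟩ := Finset.card_eq_two.mp hc
    have hX : X ∈ T := hsub (by simp)
    have hY : Y ∈ T := hsub (by simp)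
    obtain ⟨hXp, hXP, hXQ, hXR⟩ := (hmemT X).mp hX
    obtain ⟨hYp, hYP, hYQ, hYR⟩ := (hmemT Y).mp hY
    simp only [Finset.coe_insert, Finset.coe_singleton]
    rw [sOppSide_iff hXY, sOppSide_iff hXY, sOppSide_iff hXY]
    exact parity_even_aux _ _ _
      (hd X hXp Y hYp P hP hXY hXP hYP)
      (hd X hXp Y hYp Q hQ hXY hXQ hYQ)
      (hd X hXp Y hYp R hR hXY hXR hYR)
  -- B-part parity
  have hB : (((T.filter (fun S => (affineSpan ℝ ({R, S} : Set (ℝ × ℝ))).SOppSide P Q)).card : ZMod 2)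
        + ((T.filter (fun S => (affineSpan ℝ ({P, S} : Set (ℝ × ℝ))).SOppSide Q R)).card : ZMod 2)
        + ((T.filter (fun S => (affineSpan ℝ ({Q, S} : Set (ℝ × ℝ))).SOppSide P R)).card : ZMod 2))
      = (T.card : ZMod 2) := by
    rw [Finset.card_filter, Finset.card_filter, Finset.card_filter]
    push_cast
    rw [← Finset.sum_add_distrib, ← Finset.sum_add_distrib]
    rw [show ((T.card : ZMod 2)) = ∑ _x ∈ T, (1 : ZMod 2) by simp]
    apply Finset.sum_congr rfl
    intro S hS
    obtain ⟨hSp, hSP, hSQ, hSR⟩ := (hmemT S).mp hS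
    rw [sOppSide_iff (Ne.symm hSR), sOppSide_iff (Ne.symm hSP), sOppSide_iff (Ne.symm hSQ)]
    exact parity_odd_dd S P Q R
      (hd S hSp P hP Q hQ hSP hSQ hPQ)
      (hd S hSp Q hQ R hR hSQ hSR hQR)
      (hd S hSp R hR P hP hSR hSP hRP)
  -- cardinalities
  have hsub3 : ({P, Q, R} : Finset (ℝ × ℝ)) ⊆ Pts := by
    intro x hx
    simp only [Finset.mem_insert, Finset.mem_singleton] at hx
    rcases hx with rfl | rfl | rfl <;> assumption
  have hc3 : ({P, Q, R} : Finset (ℝ × ℝ)).card = 3 := by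
    rw [Finset.card_insert_of_notMem (by simp [hPQ, hPR]),
      Finset.card_insert_of_notMem (by simp [hQR]), Finset.card_singleton]
  have hTcard : T.card = n - 3 := by
    rw [hT, Finset.card_sdiff_of_subset hsub3, hc3, hcard]
  have hn3 : 3 ≤ n := by
    calc 3 = ({P, Q, R} : Finset (ℝ × ℝ)).card := hc3.symm
    _ ≤ Pts.card := Finset.card_le_card hsub3
    _ = n := hcard
  have key : ((sepCount Pts P Q + sepCount Pts Q R + sepCount Pts P R : ℕ) : ZMod 2)
      = ((n - 3 : ℕ) : ZMod 2) := by
    rw [s1, s2, s3]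
    push_cast
    rw [← hTcard]
    linear_combination hA + hB
  have key2 : sepCount Pts P Q + sepCount Pts Q R + sepCount Pts P R ≡ n - 3 [MOD 2] :=
    (ZMod.natCast_eq_natCast_iff _ _ _).mp key
  unfold Nat.ModEq at key2 h ⊢
  omega

end
end

section
/- Let 𝒫 be a configuration of n points in general position in the plane whose convex hull has size 3, with hull vertices A, B, C. Then n(A,B) + n(A,C) + n(B,C) = n² − 4n + 3. -/
open scoped Classical

noncomputable section

namespace SepAux

/-- Cross-product affine functional vanishing on the line through `R`, `S`. -/
def fl (R S z : ℝ × ℝ) : ℝ := (S.1 - R.1) * (z.2 - R.2) - (S.2 - R.2) * (z.1 - R.1)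

lemma fl_self_left (R S : ℝ × ℝ) : fl R S R = 0 := by simp [fl]

lemma fl_self_right (R S : ℝ × ℝ) : fl R S S = 0 := by simp [fl]; ring

lemma fl_combo (R S x y : ℝ × ℝ) {a b : ℝ} (hab : a + b = 1) :
    fl R S (a • x + b • y) = a * fl R S x + b * fl R S y := by
  obtain rfl : b = 1 - a := by linarith
  simp [fl, Prod.smul_def, smul_eq_mul]
  ring

lemma fl_lineMap (R S x y : ℝ × ℝ) (t : ℝ) :
    fl R S (AffineMap.lineMap x y t) = (1 - t) * fl R S x + t * fl R S y := by
  have h := fl_combo R S x y (a := 1 - t) (b := t) (by ring)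
  rw [← h]
  congr 1
  simp [AffineMap.lineMap_apply, Prod.smul_def, smul_eq_mul, Prod.ext_iff, vsub_eq_sub,
    vadd_eq_add]
  constructor <;> ring

lemma mem_line_iff {R S : ℝ × ℝ} (hRS : R ≠ S) (z : ℝ × ℝ) :
    z ∈ affineSpan ℝ ({R, S} : Set (ℝ × ℝ)) ↔ fl R S z = 0 := by
  constructor
  · intro hz
    have hcol : Collinear ℝ ({z, R, S} : Set (ℝ × ℝ)) :=
      collinear_insert_of_mem_affineSpan_pair hz
    rw [collinear_iff_of_mem (show R ∈ ({z, R, S} : Set (ℝ × ℝ)) by simp)] at hcol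
    obtain ⟨v, hv⟩ := hcol
    obtain ⟨rz, hrz⟩ := hv z (by simp)
    obtain ⟨rs, hrs⟩ := hv S (by simp)
    rw [hrz, hrs]
    simp [fl, vadd_eq_add, Prod.smul_def, smul_eq_mul]
    ring
  · intro hz
    have hu : S - R ≠ 0 := sub_ne_zero.2 hRS.symm
    by_cases h1 : S.1 - R.1 = 0
    · have h2 : S.2 - R.2 ≠ 0 := by
        intro h2
        exact hu (Prod.ext h1 h2)
      have hz1 : z.1 = R.1 := by
        have := hz
        simp only [fl, h1, zero_mul, zero_sub, neg_eq_zero, mul_eq_zero] at this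
        rcases this with h | h
        · exact absurd h h2
        · linarith [sub_eq_zero.1 h]
      have key : ((z.2 - R.2) / (S.2 - R.2)) • (S -ᵥ R) +ᵥ R = z := by
        apply Prod.ext
        · simp [vsub_eq_sub, vadd_eq_add, Prod.smul_def, smul_eq_mul, h1, hz1]
        · simp [vsub_eq_sub, vadd_eq_add, Prod.smul_def, smul_eq_mul]
          field_simp
          ring
      rw [← key]
      exact smul_vsub_vadd_mem_affineSpan_pair _ _ _
    · have key : ((z.1 - R.1) / (S.1 - R.1)) • (S -ᵥ R) +ᵥ R = z := by
        apply Prod.ext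
        · simp [vsub_eq_sub, vadd_eq_add, Prod.smul_def, smul_eq_mul]
          field_simp
          ring
        · simp [vsub_eq_sub, vadd_eq_add, Prod.smul_def, smul_eq_mul]
          have h3 : (S.2 - R.2) * (z.1 - R.1) = (S.1 - R.1) * (z.2 - R.2) := by
            simp only [fl] at hz; linarith
          field_simp
          linarith [h3]
      rw [← key]
      exact smul_vsub_vadd_mem_affineSpan_pair _ _ _

lemma sOppSide_iff {R S : ℝ × ℝ} (hRS : R ≠ S) (x y : ℝ × ℝ) :
    (affineSpan ℝ ({R, S} : Set (ℝ × ℝ))).SOppSide x y ↔ fl R S x * fl R S y < 0 := by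
  set f := fl R S with hf
  have hmem : ∀ z, z ∈ affineSpan ℝ ({R, S} : Set (ℝ × ℝ)) ↔ f z = 0 :=
    fun z => mem_line_iff hRS z
  have haff : ∀ x y t, f (AffineMap.lineMap x y t) = (1 - t) * f x + t * f y :=
    fun x y t => fl_lineMap R S x y t
  constructor
  · rintro ⟨hw, hx, hy⟩
    obtain ⟨p, hp, hbtw⟩ := AffineSubspace.wOppSide_iff_exists_wbtw.1 hw
    have hfx : f x ≠ 0 := fun h => hx ((hmem x).2 h)
    have hfy : f y ≠ 0 := fun h => hy ((hmem y).2 h)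
    obtain ⟨t, ht, hteq⟩ := hbtw
    have hfp : f p = 0 := (hmem p).1 hp
    rw [← hteq] at hfp
    rw [haff] at hfp
    have ht0 : 0 < t := by
      rcases lt_or_eq_of_le ht.1 with h | h
      · exact h
      · exfalso; apply hfx; rw [← h] at hfp; simpa using hfp
    have ht1 : t < 1 := by
      rcases lt_or_eq_of_le ht.2 with h | h
      · exact h
      · exfalso; apply hfy; rw [h] at hfp; simpa using hfp
    have hkey : ((1 - t) * f x + t * f y) * f y = 0 := by rw [hfp]; ring
    nlinarith [mul_pos ht0 (mul_self_pos.2 hfy), mul_self_pos.2 hfy]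
  · intro hlt
    have hfx : f x ≠ 0 := by intro h; rw [h] at hlt; simp at hlt
    have hfy : f y ≠ 0 := by intro h; rw [h] at hlt; simp at hlt
    have hd : f x - f y ≠ 0 := by
      rcases mul_neg_iff.1 hlt with ⟨h1, h2⟩ | ⟨h1, h2⟩ <;> intro h <;> nlinarith
    set t : ℝ := f x / (f x - f y) with htdef
    have ht0 : 0 < t := by
      rcases mul_neg_iff.1 hlt with ⟨h1, h2⟩ | ⟨h1, h2⟩
      · exact div_pos h1 (by linarith)
      · exact div_pos_of_neg_of_neg h1 (by linarith)
    have ht1 : t < 1 := by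
      rw [htdef, div_lt_one_iff]
      rcases mul_neg_iff.1 hlt with ⟨h1, h2⟩ | ⟨h1, h2⟩
      · left; constructor <;> linarith
      · right; right; constructor <;> linarith
    set p := AffineMap.lineMap x y t with hpdef
    have hfp : f p = 0 := by
      rw [hpdef, haff, htdef]
      field_simp
      ring
    refine ⟨AffineSubspace.wOppSide_iff_exists_wbtw.2 ⟨p, (hmem p).2 hfp, ?_⟩,
      fun h => hfx ((hmem x).1 h), fun h => hfy ((hmem y).1 h)⟩
    rw [hpdef]
    exact wbtw_lineMap_iff.2 (Or.inr ⟨ht0.le, ht1.le⟩)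

lemma combo_pos {x y a b : ℝ} (hx : 0 < x) (hy : 0 < y) (ha : 0 ≤ a) (hb : 0 ≤ b)
    (hab : a + b = 1) : 0 < a * x + b * y := by
  rcases eq_or_lt_of_le ha with h | h
  · rw [← h] at hab ⊢; simp at hab ⊢; nlinarith
  · nlinarith [mul_nonneg hb hy.le, mul_pos h hx]

lemma pos_on_hull (f : ℝ × ℝ → ℝ)
    (hcombo : ∀ x y : ℝ × ℝ, ∀ a b : ℝ, a + b = 1 → f (a • x + b • y) = a * f x + b * f y)
    {A B C P : ℝ × ℝ} (hA : 0 < f A) (hB : 0 < f B) (hC : 0 < f C)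
    (hP : P ∈ convexHull ℝ ({A, B, C} : Set (ℝ × ℝ))) : 0 < f P := by
  rw [convexHull_insert (by simp : ({B, C} : Set (ℝ × ℝ)).Nonempty), convexHull_pair,
    mem_convexJoin] at hP
  obtain ⟨v, hv, u, hu, hPu⟩ := hP
  rw [Set.mem_singleton_iff] at hv
  subst hv
  obtain ⟨c, d, hc, hd, hcd, hu'⟩ := hu
  obtain ⟨a, b, ha, hb, hab, hP'⟩ := hPu
  have hfu : 0 < f u := by
    rw [← hu', hcombo B C c d hcd]
    exact combo_pos hB hC hc hd hcd
  rw [← hP', hcombo v u a b hab]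
  exact combo_pos hA hfu ha hb hab

lemma not_both_pos (f : ℝ × ℝ → ℝ)
    (hcombo : ∀ x y : ℝ × ℝ, ∀ a b : ℝ, a + b = 1 → f (a • x + b • y) = a * f x + b * f y)
    {A B C S : ℝ × ℝ} (hS : S ∈ convexHull ℝ ({A, B, C} : Set (ℝ × ℝ))) (hSC : S ≠ C)
    (hfC : f C = 0) (hfS : f S = 0) (hA : 0 < f A) (hB : 0 < f B) : False := by
  have hset : ({A, B, C} : Set (ℝ × ℝ)) = insert C {A, B} := by
    ext z; simp; tauto
  rw [hset, convexHull_insert (by simp : ({A, B} : Set (ℝ × ℝ)).Nonempty), convexHull_pair,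
    mem_convexJoin] at hS
  obtain ⟨v, hv, u, hu, hSu⟩ := hS
  rw [Set.mem_singleton_iff] at hv
  subst hv
  obtain ⟨c, d, hc, hd, hcd, hu'⟩ := hu
  obtain ⟨a, b, ha, hb, hab, hS'⟩ := hSu
  have hfu : 0 < f u := by
    rw [← hu', hcombo A B c d hcd]
    exact combo_pos hA hB hc hd hcd
  have hfS' : f S = a * f v + b * f u := by rw [← hS', hcombo v u a b hab]
  have hb0 : b = 0 := by
    rw [hfS, hfC] at hfS'
    nlinarith
  apply hSC
  rw [← hS', hb0]
  have : a = 1 := by linarith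
  simp [this]

lemma two_of_three {a b c : ℝ} (ha : a ≠ 0) (hb : b ≠ 0) (hc : c ≠ 0)
    (h1 : ¬(0 < a ∧ 0 < b ∧ 0 < c)) (h2 : ¬(a < 0 ∧ b < 0 ∧ c < 0)) :
    ((if a * b < 0 then 1 else 0) + (if a * c < 0 then 1 else 0)
      + (if b * c < 0 then 1 else 0) : ℕ) = 2 := by
  rcases ha.lt_or_gt with ha' | ha' <;> rcases hb.lt_or_gt with hb' | hb' <;>
    rcases hc.lt_or_gt with hc' | hc'
  · exact absurd ⟨ha', hb', hc'⟩ h2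
  · rw [if_neg (by nlinarith), if_pos (by nlinarith), if_pos (by nlinarith)]
  · rw [if_pos (by nlinarith), if_neg (by nlinarith), if_pos (by nlinarith)]
  · rw [if_pos (by nlinarith), if_pos (by nlinarith), if_neg (by nlinarith)]
  · rw [if_pos (by nlinarith), if_pos (by nlinarith), if_neg (by nlinarith)]
  · rw [if_pos (by nlinarith), if_neg (by nlinarith), if_pos (by nlinarith)]
  · rw [if_neg (by nlinarith), if_pos (by nlinarith), if_pos (by nlinarith)]
  · exact absurd ⟨ha', hb', hc'⟩ h1

lemma sepCount_eq (Pts : Finset (ℝ × ℝ)) (P Q : ℝ × ℝ) :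
    sepCount Pts P Q = ((Finset.powersetCard 2 (Pts \ {P, Q})).filter
      (fun s : Finset (ℝ × ℝ) => (affineSpan ℝ (↑s : Set (ℝ × ℝ))).SOppSide P Q)).card := by
  unfold sepCount
  rw [bind_pure_comp, Finset.fmap_def, Finset.filter_image]
  exact Finset.card_image_of_injective _ Finset.coe_injective

/-- any line through the third hull vertex `C` and another point `x` of the configuration
separates `A` and `B`. -/
lemma sep_through_vertex (Pts : Finset (ℝ × ℝ)) (hgen : GenPos Pts)
    {A B C x : ℝ × ℝ} (hA : A ∈ Pts) (hB : B ∈ Pts) (hC : C ∈ Pts) (hx : x ∈ Pts)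
    (hAB : A ≠ B) (hAC : A ≠ C) (hBC : B ≠ C)
    (hxA : x ≠ A) (hxB : x ≠ B) (hxC : x ≠ C)
    (hxhull : x ∈ convexHull ℝ ({A, B, C} : Set (ℝ × ℝ))) :
    (affineSpan ℝ ({C, x} : Set (ℝ × ℝ))).SOppSide A B := by
  have hCx : C ≠ x := fun h => hxC h.symm
  rw [sOppSide_iff hCx]
  have hcombo := fun (u v : ℝ × ℝ) (a b : ℝ) (hab : a + b = 1) => fl_combo C x u v hab
  have hfA : fl C x A ≠ 0 := by
    intro h
    exact hgen A hA C hC x hx hAC (fun h' => hxA h'.symm) hCx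
      (collinear_insert_of_mem_affineSpan_pair ((mem_line_iff hCx A).2 h))
  have hfB : fl C x B ≠ 0 := by
    intro h
    exact hgen B hB C hC x hx hBC (fun h' => hxB h'.symm) hCx
      (collinear_insert_of_mem_affineSpan_pair ((mem_line_iff hCx B).2 h))
  by_contra hge
  push_neg at hge
  have hpos : 0 < fl C x A * fl C x B :=
    lt_of_le_of_ne hge (Ne.symm (mul_ne_zero hfA hfB))
  rcases mul_pos_iff.1 hpos with ⟨h1, h2⟩ | ⟨h1, h2⟩
  · exact not_both_pos (fl C x) hcombo hxhull hxC (fl_self_left C x) (fl_self_right C x) h1 h2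
  · refine not_both_pos (fun z => - fl C x z) ?_ hxhull hxC (by simp [fl_self_left])
      (by simp [fl_self_right]) (by show (0:ℝ) < - fl C x A; linarith)
      (by show (0:ℝ) < - fl C x B; linarith)
    intro u v a b hab
    show - fl C x (a • u + b • v) = a * - fl C x u + b * - fl C x v
    rw [fl_combo C x u v hab]; ring

/-- a line through two non-vertex points separates exactly two of the three vertex pairs. -/
lemma pair_sum_two (Pts : Finset (ℝ × ℝ)) (hgen : GenPos Pts)
    {A B C R S : ℝ × ℝ} (hA : A ∈ Pts) (hB : B ∈ Pts) (hC : C ∈ Pts)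
    (hR : R ∈ Pts) (hS : S ∈ Pts)
    (hAB : A ≠ B) (hAC : A ≠ C) (hBC : B ≠ C) (hRS : R ≠ S)
    (hRA : R ≠ A) (hRB : R ≠ B) (hRC : R ≠ C)
    (hSA : S ≠ A) (hSB : S ≠ B) (hSC : S ≠ C)
    (hRhull : R ∈ convexHull ℝ ({A, B, C} : Set (ℝ × ℝ))) :
    ((if (affineSpan ℝ ({R, S} : Set (ℝ × ℝ))).SOppSide A B then 1 else 0)
      + (if (affineSpan ℝ ({R, S} : Set (ℝ × ℝ))).SOppSide A C then 1 else 0)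
      + (if (affineSpan ℝ ({R, S} : Set (ℝ × ℝ))).SOppSide B C then 1 else 0) : ℕ) = 2 := by
  have hne : ∀ z : ℝ × ℝ, z ∈ Pts → z ≠ R → z ≠ S → fl R S z ≠ 0 := by
    intro z hz hzR hzS h
    exact hgen z hz R hR S hS hzR hzS hRS
      (collinear_insert_of_mem_affineSpan_pair ((mem_line_iff hRS z).2 h))
  have hfA := hne A hA (fun h => hRA h.symm) (fun h => hSA h.symm)
  have hfB := hne B hB (fun h => hRB h.symm) (fun h => hSB h.symm)
  have hfC := hne C hC (fun h => hRC h.symm) (fun h => hSC h.symm)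
  have hcombo := fun (u v : ℝ × ℝ) (a b : ℝ) (hab : a + b = 1) => fl_combo R S u v hab
  have hnotpos : ¬(0 < fl R S A ∧ 0 < fl R S B ∧ 0 < fl R S C) := by
    rintro ⟨h1, h2, h3⟩
    have := pos_on_hull (fl R S) hcombo h1 h2 h3 hRhull
    rw [fl_self_left] at this
    exact lt_irrefl 0 this
  have hnotneg : ¬(fl R S A < 0 ∧ fl R S B < 0 ∧ fl R S C < 0) := by
    rintro ⟨h1, h2, h3⟩
    have := pos_on_hull (fun z => - fl R S z)
      (by intro u v a b hab
          show - fl R S (a • u + b • v) = a * - fl R S u + b * - fl R S v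
          rw [fl_combo R S u v hab]; ring)
      (by show (0:ℝ) < - fl R S A; linarith) (by show (0:ℝ) < - fl R S B; linarith)
      (by show (0:ℝ) < - fl R S C; linarith) hRhull
    rw [fl_self_left] at this
    exact lt_irrefl 0 (by simpa using this)
  rw [if_congr (sOppSide_iff hRS A B) rfl rfl, if_congr (sOppSide_iff hRS A C) rfl rfl,
    if_congr (sOppSide_iff hRS B C) rfl rfl]
  exact two_of_three hfA hfB hfC hnotpos hnotneg

lemma count_split (I : Finset (ℝ × ℝ)) (C : ℝ × ℝ) (hC : C ∉ I)
    (p : Finset (ℝ × ℝ) → Prop)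
    (hp : ∀ x ∈ I, p {C, x}) :
    ((Finset.powersetCard 2 (insert C I)).filter p).card
      = I.card + ((Finset.powersetCard 2 I).filter p).card := by
  classical
  set X := (Finset.powersetCard 2 (insert C I)).filter p with hX
  have hsplit := Finset.card_filter_add_card_filter_not
    (s := X) (p := fun s => C ∈ s)
  have e1 : X.filter (fun s => C ∈ s) = I.image (fun x => ({C, x} : Finset (ℝ × ℝ))) := by
    ext s
    simp only [hX, Finset.mem_filter, Finset.mem_powersetCard, Finset.mem_image]
    constructor
    · rintro ⟨⟨⟨hsub, hcard⟩, hps⟩, hCs⟩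
      obtain ⟨u, v, huv, rfl⟩ := Finset.card_eq_two.1 hcard
      rcases Finset.mem_insert.1 hCs with rfl | hCv
      · refine ⟨v, ?_, rfl⟩
        have hv := hsub (Finset.mem_insert_of_mem (Finset.mem_singleton_self v))
        rcases Finset.mem_insert.1 hv with rfl | h
        · exact absurd rfl huv
        · exact h
      · rw [Finset.mem_singleton] at hCv
        subst hCv
        refine ⟨u, ?_, by rw [Finset.pair_comm]⟩
        have hu := hsub (Finset.mem_insert_self u _)
        rcases Finset.mem_insert.1 hu with rfl | h
        · exact absurd rfl huv
        · exact h
    · rintro ⟨x, hx, rfl⟩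
      have hCx : C ≠ x := fun h => hC (h ▸ hx)
      refine ⟨⟨⟨?_, ?_⟩, hp x hx⟩, Finset.mem_insert_self _ _⟩
      · intro z hz
        rcases Finset.mem_insert.1 hz with rfl | hz'
        · exact Finset.mem_insert_self _ _
        · rw [Finset.mem_singleton] at hz'
          subst hz'
          exact Finset.mem_insert_of_mem hx
      · exact Finset.card_pair hCx
  have e2 : X.filter (fun s => C ∉ s) = (Finset.powersetCard 2 I).filter p := by
    ext s
    simp only [hX, Finset.mem_filter, Finset.mem_powersetCard]
    constructor
    · rintro ⟨⟨⟨hsub, hcard⟩, hps⟩, hCs⟩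
      refine ⟨⟨fun z hz => ?_, hcard⟩, hps⟩
      rcases Finset.mem_insert.1 (hsub hz) with rfl | h
      · exact absurd hz hCs
      · exact h
    · rintro ⟨⟨hsub, hcard⟩, hps⟩
      exact ⟨⟨⟨fun z hz => Finset.mem_insert_of_mem (hsub hz), hcard⟩, hps⟩,
        fun h => hC (hsub h)⟩
  have himg : (I.image (fun x => ({C, x} : Finset (ℝ × ℝ)))).card = I.card := by
    apply Finset.card_image_of_injOn
    intro x hx y hy hxy
    have hxy' : ({C, x} : Finset (ℝ × ℝ)) = {C, y} := hxy
    have hxC : x ≠ C := fun h => hC (h ▸ hx)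
    have : x ∈ ({C, y} : Finset (ℝ × ℝ)) := by
      rw [← hxy']; exact Finset.mem_insert_of_mem (Finset.mem_singleton_self x)
    rcases Finset.mem_insert.1 this with h | h
    · exact absurd h hxC
    · exact Finset.mem_singleton.1 h
  rw [← hsplit, e1, e2, himg]

lemma two_mul_choose_two_add (m : ℕ) : 2 * m.choose 2 + m = m * m := by
  induction m with
  | zero => rfl
  | succ k ih =>
      rw [Nat.choose_succ_succ, Nat.choose_one_right]
      ring_nf
      ring_nf at ih
      nlinarith [ih]

end SepAux

/-- If the convex hull of a configuration of `n` points in general position has exactly the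
three vertices `A`, `B`, `C`, then `n(A,B) + n(A,C) + n(B,C) = n² - 4n + 3`. -/
theorem sepCount_sum_hull_three (n : ℕ) (Pts : Finset (ℝ × ℝ))
    (hgen : GenPos Pts) (hcard : Pts.card = n)
    (A B C : ℝ × ℝ) (hAB : A ≠ B) (hAC : A ≠ C) (hBC : B ≠ C)
    (hhull : hullVertices Pts = {A, B, C}) :
    (sepCount Pts A B + sepCount Pts A C + sepCount Pts B C : ℤ)
      = (n : ℤ)^2 - 4 * n + 3 := by
  classical
  open SepAux in
  -- the three vertices belong to the configuration
  have hsubPts : ({A, B, C} : Set (ℝ × ℝ)) ⊆ (↑Pts : Set (ℝ × ℝ)) := by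
    rw [← hhull]
    exact extremePoints_convexHull_subset
  have hA : A ∈ Pts := by exact_mod_cast hsubPts (by simp)
  have hB : B ∈ Pts := by exact_mod_cast hsubPts (by simp)
  have hC : C ∈ Pts := by exact_mod_cast hsubPts (by simp)
  -- the convex hull of the configuration is the triangle
  have hhull2 : convexHull ℝ (↑Pts : Set (ℝ × ℝ)) = convexHull ℝ ({A, B, C} : Set (ℝ × ℝ)) := by
    have hKM := closure_convexHull_extremePoints
      (Pts.finite_toSet.isCompact_convexHull ℝ) (convex_convexHull ℝ _)
    rw [show Set.extremePoints ℝ (convexHull ℝ (↑Pts : Set (ℝ × ℝ))) = {A, B, C} from hhull]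
      at hKM
    rw [← hKM, ((Set.toFinite ({A, B, C} : Set (ℝ × ℝ))).isClosed_convexHull ℝ).closure_eq]
  have hhullmem : ∀ x ∈ Pts, x ∈ convexHull ℝ ({A, B, C} : Set (ℝ × ℝ)) := by
    intro x hx
    rw [← hhull2]
    exact subset_convexHull ℝ _ (by exact_mod_cast hx)
  -- interior points
  set I : Finset (ℝ × ℝ) := Pts \ {A, B, C} with hI
  have hmemI : ∀ x ∈ I, x ∈ Pts ∧ x ≠ A ∧ x ≠ B ∧ x ≠ C := by
    intro x hx
    simp only [hI, Finset.mem_sdiff, Finset.mem_insert, Finset.mem_singleton] at hx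
    tauto
  have hAI : A ∉ I := by simp [hI]
  have hBI : B ∉ I := by simp [hI]
  have hCI : C ∉ I := by simp [hI]
  set m := I.card with hm
  -- m = n - 3
  have hABCsub : ({A, B, C} : Finset (ℝ × ℝ)) ⊆ Pts := by
    intro z hz
    rcases Finset.mem_insert.1 hz with rfl | hz'
    · exact hA
    rcases Finset.mem_insert.1 hz' with rfl | hz''
    · exact hB
    · rw [Finset.mem_singleton] at hz''; subst hz''; exact hC
  have hcard3 : ({A, B, C} : Finset (ℝ × ℝ)).card = 3 := by
    rw [Finset.card_insert_of_notMem (by simp [hAB, hAC]),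
      Finset.card_insert_of_notMem (by simp [hBC]), Finset.card_singleton]
  have hnm : n = m + 3 := by
    rw [← hcard, hm, hI, Finset.card_sdiff_of_subset hABCsub, hcard3]
    have := Finset.card_le_card hABCsub
    omega
  -- sdiff identities
  have hsdAB : Pts \ {A, B} = insert C I := by
    ext x
    simp only [Finset.mem_sdiff, Finset.mem_insert, Finset.mem_singleton, hI]
    constructor
    · intro ⟨hx, hx'⟩
      by_cases h : x = C
      · exact Or.inl h
      · right; tauto
    · rintro (rfl | ⟨hx, hx'⟩)
      · exact ⟨hC, by push_neg; exact ⟨fun h => hAC h.symm, fun h => hBC h.symm⟩⟩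
      · exact ⟨hx, by tauto⟩
  have hsdAC : Pts \ {A, C} = insert B I := by
    ext x
    simp only [Finset.mem_sdiff, Finset.mem_insert, Finset.mem_singleton, hI]
    constructor
    · intro ⟨hx, hx'⟩
      by_cases h : x = B
      · exact Or.inl h
      · right; tauto
    · rintro (rfl | ⟨hx, hx'⟩)
      · exact ⟨hB, by push_neg; exact ⟨fun h => hAB h.symm, hBC⟩⟩
      · exact ⟨hx, by tauto⟩
  have hsdBC : Pts \ {B, C} = insert A I := by
    ext x
    simp only [Finset.mem_sdiff, Finset.mem_insert, Finset.mem_singleton, hI]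
    constructor
    · intro ⟨hx, hx'⟩
      by_cases h : x = A
      · exact Or.inl h
      · right; tauto
    · rintro (rfl | ⟨hx, hx'⟩)
      · exact ⟨hA, by push_neg; exact ⟨hAB, hAC⟩⟩
      · exact ⟨hx, by tauto⟩
  -- hull sets with permuted vertices
  have hsetACB : ({A, C, B} : Set (ℝ × ℝ)) = {A, B, C} := by ext z; simp; tauto
  have hsetBCA : ({B, C, A} : Set (ℝ × ℝ)) = {A, B, C} := by ext z; simp; tauto
  -- splitting each sepCount
  have hcAB : sepCount Pts A B = m
      + ((Finset.powersetCard 2 I).filter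
          (fun s : Finset (ℝ × ℝ) => (affineSpan ℝ (↑s : Set (ℝ × ℝ))).SOppSide A B)).card := by
    rw [sepCount_eq, hsdAB]
    apply count_split I C hCI
    intro x hx
    obtain ⟨hxP, hxA, hxB, hxC⟩ := hmemI x hx
    have : (↑({C, x} : Finset (ℝ × ℝ)) : Set (ℝ × ℝ)) = {C, x} := by simp
    rw [this]
    exact sep_through_vertex Pts hgen hA hB hC hxP hAB hAC hBC hxA hxB hxC (hhullmem x hxP)
  have hcAC : sepCount Pts A C = m
      + ((Finset.powersetCard 2 I).filter
          (fun s : Finset (ℝ × ℝ) => (affineSpan ℝ (↑s : Set (ℝ × ℝ))).SOppSide A C)).card := by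
    rw [sepCount_eq, hsdAC]
    apply count_split I B hBI
    intro x hx
    obtain ⟨hxP, hxA, hxB, hxC⟩ := hmemI x hx
    have : (↑({B, x} : Finset (ℝ × ℝ)) : Set (ℝ × ℝ)) = {B, x} := by simp
    rw [this]
    have := sep_through_vertex Pts hgen (A := A) (B := C) (C := B) hA hC hB hxP hAC hAB hBC.symm
      hxA hxC hxB (by rw [hsetACB]; exact hhullmem x hxP)
    exact this
  have hcBC : sepCount Pts B C = m
      + ((Finset.powersetCard 2 I).filter
          (fun s : Finset (ℝ × ℝ) => (affineSpan ℝ (↑s : Set (ℝ × ℝ))).SOppSide B C)).card := by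
    rw [sepCount_eq, hsdBC]
    apply count_split I A hAI
    intro x hx
    obtain ⟨hxP, hxA, hxB, hxC⟩ := hmemI x hx
    have : (↑({A, x} : Finset (ℝ × ℝ)) : Set (ℝ × ℝ)) = {A, x} := by simp
    rw [this]
    have := sep_through_vertex Pts hgen (A := B) (B := C) (C := A) hB hC hA hxP hBC hAB.symm
      hAC.symm hxB hxC hxA (by rw [hsetBCA]; exact hhullmem x hxP)
    exact this
  -- the interior-pair counts sum to 2 per pair
  have hsum2 : ((Finset.powersetCard 2 I).filter
          (fun s : Finset (ℝ × ℝ) => (affineSpan ℝ (↑s : Set (ℝ × ℝ))).SOppSide A B)).card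
      + ((Finset.powersetCard 2 I).filter
          (fun s : Finset (ℝ × ℝ) => (affineSpan ℝ (↑s : Set (ℝ × ℝ))).SOppSide A C)).card
      + ((Finset.powersetCard 2 I).filter
          (fun s : Finset (ℝ × ℝ) => (affineSpan ℝ (↑s : Set (ℝ × ℝ))).SOppSide B C)).card
      = 2 * m.choose 2 := by
    have hper : ∀ s ∈ Finset.powersetCard 2 I,
        ((if (affineSpan ℝ (↑s : Set (ℝ × ℝ))).SOppSide A B then 1 else 0)
          + (if (affineSpan ℝ (↑s : Set (ℝ × ℝ))).SOppSide A C then 1 else 0)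
          + (if (affineSpan ℝ (↑s : Set (ℝ × ℝ))).SOppSide B C then 1 else 0) : ℕ) = 2 := by
      intro s hs
      obtain ⟨hsub, hcard2⟩ := Finset.mem_powersetCard.1 hs
      obtain ⟨R, S, hRSne, rfl⟩ := Finset.card_eq_two.1 hcard2
      have hRmem : R ∈ I := hsub (Finset.mem_insert_self _ _)
      have hSmem : S ∈ I := hsub (Finset.mem_insert_of_mem (Finset.mem_singleton_self _))
      obtain ⟨hRP, hRA, hRB, hRC⟩ := hmemI R hRmem
      obtain ⟨hSP, hSA, hSB, hSC⟩ := hmemI S hSmem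
      have hcoe : (↑({R, S} : Finset (ℝ × ℝ)) : Set (ℝ × ℝ)) = {R, S} := by simp
      rw [hcoe]
      exact pair_sum_two Pts hgen hA hB hC hRP hSP hAB hAC hBC hRSne
        hRA hRB hRC hSA hSB hSC (hhullmem R hRP)
    rw [Finset.card_filter, Finset.card_filter, Finset.card_filter,
      ← Finset.sum_add_distrib, ← Finset.sum_add_distrib]
    refine (Finset.sum_congr rfl hper).trans ?_
    rw [Finset.sum_const, smul_eq_mul, Finset.card_powersetCard]
    ring
  -- final arithmetic
  have htotal : (sepCount Pts A B + sepCount Pts A C + sepCount Pts B C : ℕ)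
      = 3 * m + 2 * m.choose 2 := by
    rw [hcAB, hcAC, hcBC]
    omega
  have hch := two_mul_choose_two_add m
  have : ((3 * m + 2 * m.choose 2 : ℕ) : ℤ) = (n : ℤ)^2 - 4 * n + 3 := by
    have hn' : (n : ℤ) = (m : ℤ) + 3 := by exact_mod_cast congrArg (Nat.cast : ℕ → ℤ) hnm
    have hch' : 2 * ((m.choose 2 : ℤ)) + (m : ℤ) = (m : ℤ) * m := by exact_mod_cast hch
    push_cast
    rw [hn']
    ring_nf
    ring_nf at hch'
    linarith
  rw [← this]
  exact_mod_cast congrArg (Nat.cast : ℕ → ℤ) htotal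

end
end

section
/- Let 𝒫 be a configuration of n points in general position in the plane whose convex hull has size strictly larger than 3. Then for every triple of distinct points P, Q, R of 𝒫, n(P,Q) + n(P,R) + n(Q,R) < n² − 4n + 3. -/
open scoped Classical

noncomputable section

lemma card_pairs_mem {α : Type*} [DecidableEq α] (Pts : Finset α) {x : α} (hx : x ∈ Pts) :
    ((Pts.powersetCard 2).filter (fun s => x ∈ s)).card = Pts.card - 1 := by
  have hneg : (Pts.powersetCard 2).filter (fun s => x ∉ s) = (Pts.erase x).powersetCard 2 := by
    ext s
    simp only [Finset.mem_filter, Finset.mem_powersetCard, Finset.subset_erase]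
    tauto
  have htot := Finset.card_filter_add_card_filter_not
    (s := Pts.powersetCard 2) (p := fun s => x ∈ s)
  rw [hneg, Finset.card_powersetCard, Finset.card_powersetCard, Finset.card_erase_of_mem hx]
    at htot
  have hpos : 1 ≤ Pts.card := Finset.card_pos.mpr ⟨x, hx⟩
  obtain ⟨m, hm⟩ : ∃ m, Pts.card = m + 1 := ⟨Pts.card - 1, by omega⟩
  rw [hm] at htot ⊢
  rw [Nat.choose_succ_succ, Nat.choose_one_right] at htot
  simp only [Nat.add_sub_cancel] at htot ⊢
  norm_num at htot
  omega

lemma two_mul_choose_two (m : ℕ) : m.choose 2 * 2 = m * (m - 1) := by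
  rw [Nat.choose_two_right]
  rcases Nat.eq_zero_or_pos m with rfl | hm
  · simp
  · obtain ⟨k, rfl⟩ : ∃ k, m = k + 1 := ⟨m - 1, by omega⟩
    have he : Even ((k + 1) * k) := by
      have := Nat.even_mul_succ_self k
      rwa [mul_comm] at this
    simp only [Nat.add_sub_cancel]
    exact Nat.div_mul_cancel he.two_dvd


/-- If the 2D cross product vanishes, the three points are collinear. -/
lemma collinear_of_det_eq_zero {V W x : ℝ × ℝ}
    (h : (W.1 - V.1) * (x.2 - V.2) - (W.2 - V.2) * (x.1 - V.1) = 0) :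
    Collinear ℝ ({V, W, x} : Set (ℝ × ℝ)) := by
  rw [collinear_iff_of_mem (Set.mem_insert V _)]
  by_cases h1 : W.1 - V.1 = 0
  · by_cases h2 : W.2 - V.2 = 0
    · refine ⟨x - V, ?_⟩
      intro p hp
      simp only [Set.mem_insert_iff, Set.mem_singleton_iff] at hp
      rcases hp with hp | hp | hp
      · exact ⟨0, by rw [hp]; simp⟩
      · refine ⟨0, ?_⟩
        rw [hp]
        have hW : W = V := Prod.ext (by linarith) (by linarith)
        rw [hW]; simp
      · exact ⟨1, by rw [hp]; refine Prod.ext ?_ ?_ <;>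
          simp [vadd_eq_add]⟩
    · refine ⟨W - V, ?_⟩
      intro p hp
      simp only [Set.mem_insert_iff, Set.mem_singleton_iff] at hp
      rcases hp with hp | hp | hp
      · exact ⟨0, by rw [hp]; simp⟩
      · exact ⟨1, by rw [hp]; refine Prod.ext ?_ ?_ <;> simp [vadd_eq_add]⟩
      · refine ⟨(x.2 - V.2) / (W.2 - V.2), ?_⟩
        rw [hp]
        have hx1 : x.1 - V.1 = 0 := by
          rcases mul_eq_zero.mp (by linear_combination -h + (x.2 - V.2) * h1 : (W.2 - V.2) * (x.1 - V.1) = 0) with h' | h'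
          · exact absurd h' h2
          · exact h'
        refine Prod.ext ?_ ?_
        · simp only [Prod.fst_add, Prod.smul_fst, Prod.fst_sub, smul_eq_mul, vadd_eq_add]
          rw [h1]; simp; linarith
        · simp only [Prod.snd_add, Prod.smul_snd, Prod.snd_sub, smul_eq_mul, vadd_eq_add]
          field_simp
          ring
  · refine ⟨W - V, ?_⟩
    intro p hp
    simp only [Set.mem_insert_iff, Set.mem_singleton_iff] at hp
    rcases hp with hp | hp | hp
    · exact ⟨0, by rw [hp]; simp⟩
    · exact ⟨1, by rw [hp]; refine Prod.ext ?_ ?_ <;> simp [vadd_eq_add]⟩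
    · refine ⟨(x.1 - V.1) / (W.1 - V.1), ?_⟩
      rw [hp]
      refine Prod.ext ?_ ?_
      · simp only [Prod.fst_add, Prod.smul_fst, Prod.fst_sub, smul_eq_mul, vadd_eq_add]
        field_simp
        ring
      · simp only [Prod.snd_add, Prod.smul_snd, Prod.snd_sub, smul_eq_mul, vadd_eq_add]
        field_simp
        linear_combination h

/-- Any point on the line through `V` and `W` has vanishing cross product. -/
lemma det_eq_zero_of_mem_line {V W p : ℝ × ℝ}
    (hp : p ∈ affineSpan ℝ ({V, W} : Set (ℝ × ℝ))) :
    (W.1 - V.1) * (p.2 - V.2) - (W.2 - V.2) * (p.1 - V.1) = 0 := by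
  have hc : Collinear ℝ ({p, V, W} : Set (ℝ × ℝ)) :=
    collinear_insert_of_mem_affineSpan_pair hp
  rw [collinear_iff_of_mem (show V ∈ ({p, V, W} : Set (ℝ × ℝ)) from
    Set.mem_insert_of_mem _ (Set.mem_insert _ _))] at hc
  obtain ⟨v, hv⟩ := hc
  obtain ⟨rp, hrp⟩ := hv p (Set.mem_insert _ _)
  obtain ⟨rW, hrW⟩ := hv W (by simp)
  have e1 : p.1 = rp * v.1 + V.1 := by rw [hrp]; simp [Prod.ext_iff]
  have e2 : p.2 = rp * v.2 + V.2 := by rw [hrp]; simp [Prod.ext_iff]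
  have e3 : W.1 = rW * v.1 + V.1 := by rw [hrW]; simp [Prod.ext_iff]
  have e4 : W.2 = rW * v.2 + V.2 := by rw [hrW]; simp [Prod.ext_iff]
  rw [e1, e2, e3, e4]; ring

/-- Supporting line construction: given an extreme point `V` of the configuration, there is
another point `W` such that the line through `V` and `W` does not strictly separate any two
points of the configuration. -/
lemma exists_supporting_pair (Pts : Finset (ℝ × ℝ)) (hgen : GenPos Pts) (V : ℝ × ℝ)
    (hV : V ∈ Pts) (hVhull : V ∉ convexHull ℝ ((↑Pts : Set (ℝ × ℝ)) \ {V}))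
    (hne : ∃ x ∈ Pts, x ≠ V) :
    ∃ W ∈ Pts, W ≠ V ∧ ∀ X Y : ℝ × ℝ, X ∈ Pts → Y ∈ Pts → X ≠ V → X ≠ W → Y ≠ V → Y ≠ W →
      ¬ (affineSpan ℝ ({V, W} : Set (ℝ × ℝ))).SOppSide X Y := by
  have hfin : ((↑Pts : Set (ℝ × ℝ)) \ {V}).Finite := (Pts.finite_toSet).diff
  obtain ⟨φ, u, hφu, huV⟩ := geometric_hahn_banach_closed_point
    (convex_convexHull ℝ _) (hfin.isClosed_convexHull (𝕜 := ℝ)) hVhull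
  have hd : ∀ x ∈ Pts.erase V, φ x < φ V := by
    intro x hx
    refine lt_trans (hφu x (subset_convexHull ℝ _ ?_)) huV
    exact ⟨Finset.mem_coe.2 (Finset.mem_of_mem_erase hx), by
      simp [Finset.ne_of_mem_erase hx]⟩
  set a := φ (1, 0) with ha
  set b := φ (0, 1) with hb
  have hφab : ∀ z : ℝ × ℝ, φ z = a * z.1 + b * z.2 := by
    intro z
    have hz : z = z.1 • ((1 : ℝ), (0 : ℝ)) + z.2 • ((0 : ℝ), (1 : ℝ)) := by
      refine Prod.ext ?_ ?_ <;> simp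
    conv_lhs => rw [hz]
    rw [map_add, map_smul, map_smul]
    simp only [smul_eq_mul]
    ring
  have hSne : (Pts.erase V).Nonempty := by
    obtain ⟨x, hx, hxV⟩ := hne
    exact ⟨x, Finset.mem_erase.2 ⟨hxV, hx⟩⟩
  obtain ⟨W, hWS, hWmax⟩ := Finset.exists_max_image (Pts.erase V)
    (fun x => (-b * (x.1 - V.1) + a * (x.2 - V.2)) / (φ V - φ x)) hSne
  have hWPts : W ∈ Pts := Finset.mem_of_mem_erase hWS
  have hWne : W ≠ V := Finset.ne_of_mem_erase hWS
  have hab : 0 < a ^ 2 + b ^ 2 := by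
    rcases lt_or_eq_of_le (by positivity : (0:ℝ) ≤ a ^ 2 + b ^ 2) with h | h
    · exact h
    · exfalso
      have ha0 : a = 0 := by nlinarith
      have hb0 : b = 0 := by nlinarith
      have := hd W hWS
      rw [hφab W, hφab V, ha0, hb0] at this
      linarith
  have key : ∀ x ∈ Pts, x ≠ V → x ≠ W →
      0 < (W.1 - V.1) * (x.2 - V.2) - (W.2 - V.2) * (x.1 - V.1) := by
    intro x hx hxV hxW
    have hxS : x ∈ Pts.erase V := Finset.mem_erase.2 ⟨hxV, hx⟩
    have hdW : 0 < φ V - φ W := sub_pos.2 (hd W hWS)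
    have hdx : 0 < φ V - φ x := sub_pos.2 (hd x hxS)
    have hmax := hWmax x hxS
    rw [div_le_div_iff₀ hdx hdW] at hmax
    have hdet_ne : (W.1 - V.1) * (x.2 - V.2) - (W.2 - V.2) * (x.1 - V.1) ≠ 0 := by
      intro h0
      exact hgen V hV W hWPts x hx hWne.symm hxV.symm (fun he => hxW he.symm)
        (collinear_of_det_eq_zero h0)
    have hψ : (a ^ 2 + b ^ 2) *
        ((W.1 - V.1) * (x.2 - V.2) - (W.2 - V.2) * (x.1 - V.1)) =
        (φ V - φ x) * (-b * (W.1 - V.1) + a * (W.2 - V.2)) -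
        (φ V - φ W) * (-b * (x.1 - V.1) + a * (x.2 - V.2)) := by
      rw [hφab V, hφab x, hφab W]; ring
    have h1 : 0 ≤ (a ^ 2 + b ^ 2) *
        ((W.1 - V.1) * (x.2 - V.2) - (W.2 - V.2) * (x.1 - V.1)) := by
      rw [hψ]; nlinarith [hmax]
    have h2 : 0 ≤ (W.1 - V.1) * (x.2 - V.2) - (W.2 - V.2) * (x.1 - V.1) := by
      by_contra hneg
      have := mul_neg_of_pos_of_neg hab (lt_of_not_ge hneg)
      linarith
    exact lt_of_le_of_ne h2 (Ne.symm hdet_ne)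
  refine ⟨W, hWPts, hWne, ?_⟩
  intro X Y hX hY hXV hXW hYV hYW hopp
  obtain ⟨⟨p₁, hp₁, p₂, hp₂, hray⟩, hXs, hYs⟩ := hopp
  set ℓ : ℝ × ℝ → ℝ := fun z => (W.1 - V.1) * z.2 - (W.2 - V.2) * z.1 with hℓ
  have hDX : 0 < ℓ X - ℓ V := by
    have := key X hX hXV hXW; simp only [hℓ]; linarith [this]
  have hDY : 0 < ℓ Y - ℓ V := by
    have := key Y hY hYV hYW; simp only [hℓ]; linarith [this]
  have hp₁V : ℓ p₁ = ℓ V := by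
    have := det_eq_zero_of_mem_line hp₁; simp only [hℓ]; linarith [this]
  have hp₂V : ℓ p₂ = ℓ V := by
    have := det_eq_zero_of_mem_line hp₂; simp only [hℓ]; linarith [this]
  rcases hray with h0 | h0 | ⟨r₁, r₂, hr₁, hr₂, hre⟩
  · have : X = p₁ := by
      have := vsub_eq_zero_iff_eq.mp h0; exact this
    rw [this, hp₁V] at hDX; linarith
  · have : p₂ = Y := by
      have := vsub_eq_zero_iff_eq.mp h0; exact this
    rw [← this, hp₂V] at hDY; linarith
  · have hre1 : r₁ * (X.1 - p₁.1) = r₂ * (p₂.1 - Y.1) := by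
      have := congrArg Prod.fst hre
      simpa [vsub_eq_sub, smul_eq_mul] using this
    have hre2 : r₁ * (X.2 - p₁.2) = r₂ * (p₂.2 - Y.2) := by
      have := congrArg Prod.snd hre
      simpa [vsub_eq_sub, smul_eq_mul] using this
    have hkey : r₁ * (ℓ X - ℓ p₁) = r₂ * (ℓ p₂ - ℓ Y) := by
      simp only [hℓ]
      linear_combination (W.1 - V.1) * hre2 - (W.2 - V.2) * hre1
    rw [hp₁V, hp₂V] at hkey
    nlinarith


lemma sepCount_eq (Pts : Finset (ℝ × ℝ)) (X Y : ℝ × ℝ) :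
    sepCount Pts X Y = (((Pts \ {X, Y}).powersetCard 2).filter
      (fun s : Finset (ℝ × ℝ) => (affineSpan ℝ (↑s : Set (ℝ × ℝ))).SOppSide X Y)).card := by
  unfold sepCount
  have hbind : (do
        let a ← Finset.powersetCard 2 (Pts \ {X, Y})
        pure (↑a : Set (ℝ × ℝ))) = (Finset.powersetCard 2 (Pts \ {X, Y})).image
          (fun a : Finset (ℝ × ℝ) => (↑a : Set (ℝ × ℝ))) := by
    ext t; simp [eq_comm]
  rw [hbind, Finset.filter_image]
  exact Finset.card_image_of_injective _ Finset.coe_injective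


/-- If the convex hull of a configuration of `n` points in general position has size strictly
larger than `3`, then for every triple of distinct points `P`, `Q`, `R` of the configuration,
`n(P,Q) + n(P,R) + n(Q,R) < n² - 4n + 3`. -/
theorem sepCount_sum_lt_of_hull_gt_three (n : ℕ) (Pts : Finset (ℝ × ℝ))
    (hgen : GenPos Pts) (hcard : Pts.card = n)
    (hhull : 3 < (hullVertices Pts).ncard)
    (P Q R : ℝ × ℝ) (hP : P ∈ Pts) (hQ : Q ∈ Pts) (hR : R ∈ Pts)
    (hPQ : P ≠ Q) (hPR : P ≠ R) (hQR : Q ≠ R) :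
    (sepCount Pts P Q + sepCount Pts P R + sepCount Pts Q R : ℤ)
      < (n : ℤ)^2 - 4 * n + 3 := by
  classical
  subst hcard
  -- hull vertices facts
  have hhsub : hullVertices Pts ⊆ (↑Pts : Set (ℝ × ℝ)) := by
    intro x hx
    exact extremePoints_convexHull_subset hx
  have hn4 : 4 ≤ Pts.card := by
    have h1 := Set.ncard_le_ncard hhsub (Pts.finite_toSet)
    rw [Set.ncard_coe_finset] at h1
    omega
  -- find an extreme point outside {P, Q, R}
  obtain ⟨V, hVhv, hVout⟩ : ∃ V ∈ hullVertices Pts, V ∉ ({P, Q, R} : Set (ℝ × ℝ)) := by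
    by_contra hcon
    push_neg at hcon
    have hsub3 : hullVertices Pts ⊆ ({P, Q, R} : Set (ℝ × ℝ)) := hcon
    have h1 := Set.ncard_le_ncard hsub3 (Set.toFinite _)
    have h2 : ({P, Q, R} : Set (ℝ × ℝ)).ncard ≤ 3 := by
      refine le_trans (Set.ncard_insert_le _ _) ?_
      have := Set.ncard_insert_le Q ({R} : Set (ℝ × ℝ))
      simp [Set.ncard_singleton] at this ⊢
      omega
    omega
  have hVP : V ≠ P := by intro h; exact hVout (by simp [h])
  have hVQ : V ≠ Q := by intro h; exact hVout (by simp [h])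
  have hVR : V ≠ R := by intro h; exact hVout (by simp [h])
  have hVPts : V ∈ Pts := hhsub hVhv
  have hVnot : V ∉ convexHull ℝ ((↑Pts : Set (ℝ × ℝ)) \ {V}) := by
    have h2 := (convex_convexHull ℝ (↑Pts : Set (ℝ × ℝ))).mem_extremePoints_iff_mem_diff_convexHull_diff.mp hVhv
    intro hmem
    exact h2.2 (convexHull_mono (Set.diff_subset_diff_left (subset_convexHull ℝ _)) hmem)
  have hne : ∃ x ∈ Pts, x ≠ V := Finset.exists_mem_ne (by omega) V
  obtain ⟨W, hWPts, hWV, hWno⟩ := exists_supporting_pair Pts hgen V hVPts hVnot hne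
  -- counting setup
  set T3 : Finset (ℝ × ℝ) := {P, Q, R} with hT3
  have hT3card : T3.card = 3 := by
    rw [hT3, Finset.card_insert_of_notMem (by simp [hPQ, hPR]),
      Finset.card_insert_of_notMem (by simp [hQR]), Finset.card_singleton]
  set Pow2 : Finset (Finset (ℝ × ℝ)) := Pts.powersetCard 2 with hPow2
  set c1 : Finset (ℝ × ℝ) → Prop := fun s => s ⊆ Pts \ {P, Q} ∧
    (affineSpan ℝ (↑s : Set (ℝ × ℝ))).SOppSide P Q with hc1def
  set c2 : Finset (ℝ × ℝ) → Prop := fun s => s ⊆ Pts \ {P, R} ∧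
    (affineSpan ℝ (↑s : Set (ℝ × ℝ))).SOppSide P R with hc2def
  set c3 : Finset (ℝ × ℝ) → Prop := fun s => s ⊆ Pts \ {Q, R} ∧
    (affineSpan ℝ (↑s : Set (ℝ × ℝ))).SOppSide Q R with hc3def
  have hsep : ∀ (X Y : ℝ × ℝ), sepCount Pts X Y = (Pow2.filter (fun s => s ⊆ Pts \ {X, Y} ∧
      (affineSpan ℝ (↑s : Set (ℝ × ℝ))).SOppSide X Y)).card := by
    intro X Y
    rw [sepCount_eq]
    have heq : ((Pts \ {X, Y}).powersetCard 2).filter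
        (fun s : Finset (ℝ × ℝ) => (affineSpan ℝ (↑s : Set (ℝ × ℝ))).SOppSide X Y)
        = Pow2.filter (fun s : Finset (ℝ × ℝ) => s ⊆ Pts \ {X, Y} ∧
          (affineSpan ℝ (↑s : Set (ℝ × ℝ))).SOppSide X Y) := by
      ext s
      simp only [Finset.mem_filter, Finset.mem_powersetCard, hPow2]
      constructor
      · rintro ⟨⟨hsub, hc⟩, hopp⟩
        exact ⟨⟨hsub.trans Finset.sdiff_subset, hc⟩, hsub, hopp⟩
      · rintro ⟨⟨_, hc⟩, hsub, hopp⟩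
        exact ⟨⟨hsub, hc⟩, hopp⟩
    rw [heq]
  -- pointwise bound
  have hpt : ∀ s ∈ Pow2,
      ((if c1 s then 1 else 0) + (if c2 s then 1 else 0) + (if c3 s then 1 else 0)
        + (s ∩ T3).card : ℕ) ≤ 2 := by
    intro s hs
    rw [hPow2, Finset.mem_powersetCard] at hs
    obtain ⟨hsub, hcard2⟩ := hs
    have m1 : c1 s → P ∉ s ∧ Q ∉ s := by
      rintro ⟨hsub', -⟩
      constructor <;> intro hm <;>
        · have := (Finset.mem_sdiff.mp (hsub' hm)).2
          simp at this
    have m2 : c2 s → P ∉ s ∧ R ∉ s := by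
      rintro ⟨hsub', -⟩
      constructor <;> intro hm <;>
        · have := (Finset.mem_sdiff.mp (hsub' hm)).2
          simp at this
    have m3 : c3 s → Q ∉ s ∧ R ∉ s := by
      rintro ⟨hsub', -⟩
      constructor <;> intro hm <;>
        · have := (Finset.mem_sdiff.mp (hsub' hm)).2
          simp at this
    have hk2 : (s ∩ T3).card ≤ 2 := by
      calc (s ∩ T3).card ≤ s.card := Finset.card_le_card Finset.inter_subset_left
      _ = 2 := hcard2
    by_cases hPs : P ∈ s <;> by_cases hQs : Q ∈ s <;> by_cases hRs : R ∈ s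
    -- P, Q, R ∈ s (and similar two-in cases): all conditions fail
    · have b1 : ¬ c1 s := fun h => (m1 h).1 hPs
      have b2 : ¬ c2 s := fun h => (m2 h).1 hPs
      have b3 : ¬ c3 s := fun h => (m3 h).1 hQs
      simp only [if_neg b1, if_neg b2, if_neg b3]
      omega
    · have b1 : ¬ c1 s := fun h => (m1 h).1 hPs
      have b2 : ¬ c2 s := fun h => (m2 h).1 hPs
      have b3 : ¬ c3 s := fun h => (m3 h).1 hQs
      simp only [if_neg b1, if_neg b2, if_neg b3]
      omega
    · have b1 : ¬ c1 s := fun h => (m1 h).1 hPs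
      have b2 : ¬ c2 s := fun h => (m2 h).1 hPs
      have b3 : ¬ c3 s := fun h => (m3 h).2 hRs
      simp only [if_neg b1, if_neg b2, if_neg b3]
      omega
    -- only P ∈ s
    · have b1 : ¬ c1 s := fun h => (m1 h).1 hPs
      have b2 : ¬ c2 s := fun h => (m2 h).1 hPs
      have hk1 : (s ∩ T3).card ≤ 1 := by
        refine le_trans (Finset.card_le_card ?_) (le_of_eq (Finset.card_singleton P))
        intro x hx
        obtain ⟨hxs, hxT⟩ := Finset.mem_inter.mp hx
        rw [hT3] at hxT
        simp only [Finset.mem_insert, Finset.mem_singleton] at hxT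
        rcases hxT with rfl | rfl | rfl
        · exact Finset.mem_singleton_self _
        · exact absurd hxs hQs
        · exact absurd hxs hRs
      simp only [if_neg b1, if_neg b2]
      split <;> omega
    · have b1 : ¬ c1 s := fun h => (m1 h).2 hQs
      have b3 : ¬ c3 s := fun h => (m3 h).1 hQs
      have b2 : ¬ c2 s := fun h => (m2 h).2 hRs
      simp only [if_neg b1, if_neg b2, if_neg b3]
      omega
    -- only Q ∈ s
    · have b1 : ¬ c1 s := fun h => (m1 h).2 hQs
      have b3 : ¬ c3 s := fun h => (m3 h).1 hQs
      have hk1 : (s ∩ T3).card ≤ 1 := by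
        refine le_trans (Finset.card_le_card ?_) (le_of_eq (Finset.card_singleton Q))
        intro x hx
        obtain ⟨hxs, hxT⟩ := Finset.mem_inter.mp hx
        rw [hT3] at hxT
        simp only [Finset.mem_insert, Finset.mem_singleton] at hxT
        rcases hxT with rfl | rfl | rfl
        · exact absurd hxs hPs
        · exact Finset.mem_singleton_self _
        · exact absurd hxs hRs
      simp only [if_neg b1, if_neg b3]
      split <;> omega
    -- only R ∈ s
    · have b2 : ¬ c2 s := fun h => (m2 h).2 hRs
      have b3 : ¬ c3 s := fun h => (m3 h).2 hRs
      have hk1 : (s ∩ T3).card ≤ 1 := by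
        refine le_trans (Finset.card_le_card ?_) (le_of_eq (Finset.card_singleton R))
        intro x hx
        obtain ⟨hxs, hxT⟩ := Finset.mem_inter.mp hx
        rw [hT3] at hxT
        simp only [Finset.mem_insert, Finset.mem_singleton] at hxT
        rcases hxT with rfl | rfl | rfl
        · exact absurd hxs hPs
        · exact absurd hxs hQs
        · exact Finset.mem_singleton_self _
      simp only [if_neg b2, if_neg b3]
      split <;> omega
    -- none in s
    · have hk0 : (s ∩ T3).card = 0 := by
        rw [Finset.card_eq_zero, Finset.eq_empty_iff_forall_notMem]
        intro x hx
        obtain ⟨hxs, hxT⟩ := Finset.mem_inter.mp hx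
        rw [hT3] at hxT
        simp only [Finset.mem_insert, Finset.mem_singleton] at hxT
        rcases hxT with rfl | rfl | rfl
        · exact hPs hxs
        · exact hQs hxs
        · exact hRs hxs
      have hnotall : ¬ (c1 s ∧ c2 s ∧ c3 s) := by
        rintro ⟨h1, h2, h3⟩
        exact (h1.2.trans h3.2).not_sOppSide h2.2
      rw [hk0]
      have e0 : (if c1 s then (1:ℕ) else 0) = 0 ∨ (if c2 s then (1:ℕ) else 0) = 0 ∨
          (if c3 s then (1:ℕ) else 0) = 0 := by
        by_cases b1 : c1 s
        · by_cases b2 : c2 s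
          · right; right; rw [if_neg (fun b3 => hnotall ⟨b1, b2, b3⟩)]
          · right; left; rw [if_neg b2]
        · left; rw [if_neg b1]
      have e1 : (if c1 s then (1:ℕ) else 0) ≤ 1 := by split <;> omega
      have e2 : (if c2 s then (1:ℕ) else 0) ≤ 1 := by split <;> omega
      have e3 : (if c3 s then (1:ℕ) else 0) ≤ 1 := by split <;> omega
      omega
  -- the strict witness
  set s0 : Finset (ℝ × ℝ) := {V, W} with hs0def
  have hs0mem : s0 ∈ Pow2 := by
    rw [hPow2, Finset.mem_powersetCard]
    constructor
    · intro x hx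
      rw [hs0def] at hx
      simp only [Finset.mem_insert, Finset.mem_singleton] at hx
      rcases hx with rfl | rfl
      · exact hVPts
      · exact hWPts
    · rw [hs0def, Finset.card_insert_of_notMem (by simp [Ne.symm hWV]),
        Finset.card_singleton]
  have hs0coe : (↑s0 : Set (ℝ × ℝ)) = ({V, W} : Set (ℝ × ℝ)) := by
    rw [hs0def]; simp
  have hnos : ∀ X Y : ℝ × ℝ, X ∈ Pts → Y ∈ Pts → ¬ (s0 ⊆ Pts \ {X, Y} ∧
      (affineSpan ℝ (↑s0 : Set (ℝ × ℝ))).SOppSide X Y) := by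
    rintro X Y hX hY ⟨hsub', hopp⟩
    have hVm := (Finset.mem_sdiff.mp (hsub' (show V ∈ s0 by
      rw [hs0def]; exact Finset.mem_insert_self _ _))).2
    have hWm := (Finset.mem_sdiff.mp (hsub' (show W ∈ s0 by
      rw [hs0def]; exact Finset.mem_insert_of_mem (Finset.mem_singleton_self _)))).2
    simp only [Finset.mem_insert, Finset.mem_singleton, not_or] at hVm hWm
    rw [hs0coe] at hopp
    exact hWno X Y hX hY (Ne.symm hVm.1) (Ne.symm hWm.1) (Ne.symm hVm.2) (Ne.symm hWm.2) hopp
  have hb1 : ¬ c1 s0 := hnos P Q hP hQ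
  have hb2 : ¬ c2 s0 := hnos P R hP hR
  have hb3 : ¬ c3 s0 := hnos Q R hQ hR
  have hs0k : (s0 ∩ T3).card ≤ 1 := by
    refine le_trans (Finset.card_le_card ?_) (le_of_eq (Finset.card_singleton W))
    intro x hx
    obtain ⟨hxs, hxT⟩ := Finset.mem_inter.mp hx
    rw [hs0def] at hxs
    simp only [Finset.mem_insert, Finset.mem_singleton] at hxs
    rcases hxs with rfl | rfl
    · exfalso
      rw [hT3] at hxT
      simp only [Finset.mem_insert, Finset.mem_singleton] at hxT
      rcases hxT with rfl | rfl | rfl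
      · exact hVP rfl
      · exact hVQ rfl
      · exact hVR rfl
    · exact Finset.mem_singleton_self _
  have hs0lt : ((if c1 s0 then 1 else 0) + (if c2 s0 then 1 else 0) + (if c3 s0 then 1 else 0)
      + (s0 ∩ T3).card : ℕ) < 2 := by
    simp only [if_neg hb1, if_neg hb2, if_neg hb3]
    omega
  -- sum up
  have hsum : ∑ s ∈ Pow2, ((if c1 s then 1 else 0) + (if c2 s then 1 else 0)
      + (if c3 s then 1 else 0) + (s ∩ T3).card : ℕ) < ∑ _s ∈ Pow2, (2 : ℕ) :=
    Finset.sum_lt_sum hpt ⟨s0, hs0mem, hs0lt⟩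
  rw [Finset.sum_const, smul_eq_mul] at hsum
  have hsplit : ∑ s ∈ Pow2, ((if c1 s then 1 else 0) + (if c2 s then 1 else 0)
      + (if c3 s then 1 else 0) + (s ∩ T3).card : ℕ)
      = (∑ s ∈ Pow2, if c1 s then 1 else 0) + (∑ s ∈ Pow2, if c2 s then 1 else 0)
      + (∑ s ∈ Pow2, if c3 s then 1 else 0) + ∑ s ∈ Pow2, (s ∩ T3).card := by
    rw [← Finset.sum_add_distrib, ← Finset.sum_add_distrib, ← Finset.sum_add_distrib]
  rw [hsplit] at hsum
  have hS1 : sepCount Pts P Q = ∑ s ∈ Pow2, if c1 s then 1 else 0 := by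
    rw [hsep P Q, Finset.card_filter]
  have hS2 : sepCount Pts P R = ∑ s ∈ Pow2, if c2 s then 1 else 0 := by
    rw [hsep P R, Finset.card_filter]
  have hS3 : sepCount Pts Q R = ∑ s ∈ Pow2, if c3 s then 1 else 0 := by
    rw [hsep Q R, Finset.card_filter]
  -- intersection count
  have hkcount : ∑ s ∈ Pow2, (s ∩ T3).card = 3 * (Pts.card - 1) := by
    have hterm : ∀ s : Finset (ℝ × ℝ), (s ∩ T3).card = ∑ x ∈ T3, if x ∈ s then 1 else 0 := by
      intro s
      rw [Finset.inter_comm, ← Finset.filter_mem_eq_inter, Finset.card_filter]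
    calc ∑ s ∈ Pow2, (s ∩ T3).card = ∑ s ∈ Pow2, ∑ x ∈ T3, if x ∈ s then 1 else 0 := by
          exact Finset.sum_congr rfl fun s _ => hterm s
      _ = ∑ x ∈ T3, ∑ s ∈ Pow2, if x ∈ s then 1 else 0 := Finset.sum_comm
      _ = ∑ x ∈ T3, (Pts.card - 1) := by
          refine Finset.sum_congr rfl fun x hx => ?_
          have hxPts : x ∈ Pts := by
            rw [hT3] at hx
            simp only [Finset.mem_insert, Finset.mem_singleton] at hx
            rcases hx with rfl | rfl | rfl <;> assumption
          rw [← Finset.card_filter, hPow2, card_pairs_mem Pts hxPts]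
      _ = 3 * (Pts.card - 1) := by rw [Finset.sum_const, hT3card, smul_eq_mul]
  have hPow2card : Pow2.card = Pts.card.choose 2 := by
    rw [hPow2, Finset.card_powersetCard]
  -- final arithmetic
  rw [hkcount, hPow2card] at hsum
  have hchoose := two_mul_choose_two Pts.card
  set m := Pts.card with hm
  have hfinal : sepCount Pts P Q + sepCount Pts P R + sepCount Pts Q R + 3 * (m - 1)
      < m * (m - 1) := by
    rw [hS1, hS2, hS3]
    omega
  have hcast : ((sepCount Pts P Q + sepCount Pts P R + sepCount Pts Q R : ℕ) : ℤ)
      + 3 * ((m : ℤ) - 1) < (m : ℤ) * ((m : ℤ) - 1) := by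
    have h1 : ((m - 1 : ℕ) : ℤ) = (m : ℤ) - 1 := by
      have : 1 ≤ m := by omega
      omega
    calc ((sepCount Pts P Q + sepCount Pts P R + sepCount Pts Q R : ℕ) : ℤ)
          + 3 * ((m : ℤ) - 1)
        = ((sepCount Pts P Q + sepCount Pts P R + sepCount Pts Q R + 3 * (m - 1) : ℕ) : ℤ) := by
          push_cast [h1]; ring
      _ < ((m * (m - 1) : ℕ) : ℤ) := by exact_mod_cast hfinal
      _ = (m : ℤ) * ((m : ℤ) - 1) := by push_cast [h1]; ring
  push_cast at hcast ⊢
  nlinarith [hcast]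

end
end
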